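/- arXiv:1907.08652 — 5 statements merged into one kernel-verified Lean document; each statement's English description precedes it below -/
import Mathlib

section
/- Let f : M → M be a hyperbolic homeomorphism with local product structure on a compact metric space (M,d), let A : M → GL(d,ℝ) be ν-Hölder continuous, α an automorphism of GL(d,ℝ), suppose the α-twisted cocycle A_α is fiber-bunched with constants ρ, θ, and let δ > 0 satisfy 5ρ + 2θ + δ < λν. Fix x ∈ M. Then there exists a family of norms (‖·‖_k)_{k∈ℕ} on ℝ^d and a constant C > 0, depending only on A, α, f and δ, such that: (a) ‖v‖ ≤ ‖v‖_k ≤ C e^{2ρk} ‖v‖ for every v ∈ ℝ^d and k ∈ ℕ; and (b) for every k ≥ 1, the ratio max{‖α^{-k}(A(f^{k-1}(x)))v‖_k : ‖v‖_{k-1} = 1} / min{‖α^{-k}(A(f^{k-1}(x)))w‖_k : ‖w‖_{k-1} = 1} is at most e^{2θ + δ}. -/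
open scoped Matrix.Norms.L2Operator

noncomputable section

/-- The `α`-twisted cocycle generated by `A` over `f`, at nonnegative times. -/
def twcN {M G : Type*} [Group G] (f : Equiv.Perm M) (α : MulAut G) (A : M → G) :
    ℕ → M → G
  | 0, _ => 1
  | n + 1, x => A ((f ^ n) x) * α (twcN f α A n x)

/-- The `α`-twisted cocycle generated by `A` over `f`, at all integer times. -/
def twc {M G : Type*} [Group G] (f : Equiv.Perm M) (α : MulAut G) (A : M → G) :
    ℤ → M → G
  | Int.ofNat n, x => twcN f α A n x
  | Int.negSucc n, x =>
      (α ^ (Int.negSucc n)) ((twcN f α A (n + 1) ((f ^ (Int.negSucc n)) x))⁻¹)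

/-- The local stable set `W^s_ε(x)`. -/
def localStable {M : Type*} [MetricSpace M] (f : Equiv.Perm M) (ε : ℝ) (x : M) :
    Set M :=
  {y | ∀ n : ℕ, dist ((f ^ n) x) ((f ^ n) y) ≤ ε}

/-- The local unstable set `W^u_ε(x)`. -/
def localUnstable {M : Type*} [MetricSpace M] (f : Equiv.Perm M) (ε : ℝ) (x : M) :
    Set M :=
  {y | ∀ n : ℕ, dist ((f⁻¹ ^ n) x) ((f⁻¹ ^ n) y) ≤ ε}

/-- The global stable set `W^s(x) = ⋃_{n ≥ 0} f^{-n}(W^s_ε(f^n(x)))`. -/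
def globalStable {M : Type*} [MetricSpace M] (f : Equiv.Perm M) (ε : ℝ) (x : M) :
    Set M :=
  {y | ∃ n : ℕ, (f ^ n) y ∈ localStable f ε ((f ^ n) x)}

/-- The global unstable set `W^u(x) = ⋃_{n ≥ 0} f^{n}(W^u_ε(f^{-n}(x)))`. -/
def globalUnstable {M : Type*} [MetricSpace M] (f : Equiv.Perm M) (ε : ℝ) (x : M) :
    Set M :=
  {y | ∃ n : ℕ, (f⁻¹ ^ n) y ∈ localUnstable f ε ((f⁻¹ ^ n) x)}

/-- `f` is a hyperbolic homeomorphism with local product structure, with constants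
`C, ε, λ, τ`. -/
structure IsHyperbolicLPS {M : Type*} [MetricSpace M] (f : M ≃ₜ M)
    (C ε lam τ : ℝ) : Prop where
  C_pos : 0 < C
  eps_pos : 0 < ε
  lam_pos : 0 < lam
  tau_pos : 0 < τ
  stable_contr : ∀ x y₁ y₂ : M, y₁ ∈ localStable f.toEquiv ε x →
    y₂ ∈ localStable f.toEquiv ε x → ∀ n : ℕ,
      dist ((f.toEquiv ^ n) y₁) ((f.toEquiv ^ n) y₂) ≤
        C * Real.exp (-lam * n) * dist y₁ y₂
  unstable_contr : ∀ x y₁ y₂ : M, y₁ ∈ localUnstable f.toEquiv ε x →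
    y₂ ∈ localUnstable f.toEquiv ε x → ∀ n : ℕ,
      dist ((f.toEquiv⁻¹ ^ n) y₁) ((f.toEquiv⁻¹ ^ n) y₂) ≤
        C * Real.exp (-lam * n) * dist y₁ y₂
  bracket : ∃ br : {p : M × M // dist p.1 p.2 ≤ τ} → M, Continuous br ∧
    ∀ p : {p : M × M // dist p.1 p.2 ≤ τ},
      localStable f.toEquiv ε p.1.1 ∩ localUnstable f.toEquiv ε p.1.2 = {br p}

/-- `A` is `ν`-Hölder continuous (w.r.t. the operator norm on matrices). -/
def IsHolder {M : Type*} [MetricSpace M] {d : ℕ} (ν : ℝ)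
    (A : M → GL (Fin d) ℝ) : Prop :=
  ∃ C > 0, ∀ x y : M,
    ‖(A x : Matrix (Fin d) (Fin d) ℝ) - (A y : Matrix (Fin d) (Fin d) ℝ)‖ ≤
      C * dist x y ^ ν

/-- The fiber-bunching inequalities (i), (ii), (iii) with constants `ρ, θ`. -/
def FiberBunchedWith {M : Type*} [MetricSpace M] {d : ℕ} (f : Equiv.Perm M)
    (α : MulAut (GL (Fin d) ℝ)) (A : M → GL (Fin d) ℝ) (ρ θ : ℝ) : Prop :=
  ∃ C > 0,
    (∀ (n : ℤ) (x : M),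
      ‖(((α ^ (-n)) (twc f α A n x) : GL (Fin d) ℝ) : Matrix (Fin d) (Fin d) ℝ)‖ *
        ‖(((α ^ (-n)) ((twc f α A n x)⁻¹) : GL (Fin d) ℝ) : Matrix (Fin d) (Fin d) ℝ)‖ <
        C * Real.exp (θ * |(n : ℝ)|)) ∧
    (∀ (n : ℤ) (T₁ T₂ : GL (Fin d) ℝ),
      ‖(((α ^ n) T₁ : GL (Fin d) ℝ) : Matrix (Fin d) (Fin d) ℝ) -
          (((α ^ n) T₂ : GL (Fin d) ℝ) : Matrix (Fin d) (Fin d) ℝ)‖ ≤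
        C * Real.exp (ρ * |(n : ℝ)|) *
          ‖(T₁ : Matrix (Fin d) (Fin d) ℝ) - (T₂ : Matrix (Fin d) (Fin d) ℝ)‖) ∧
    (∀ (n : ℤ) (T : GL (Fin d) ℝ),
      ‖(((α ^ n) T : GL (Fin d) ℝ) : Matrix (Fin d) (Fin d) ℝ)‖ ≤
        C * Real.exp (ρ * |(n : ℝ)|) * ‖(T : Matrix (Fin d) (Fin d) ℝ)‖)

/-- The twisted cocycle generated by `A` is fiber-bunched. -/
def FiberBunched {M : Type*} [MetricSpace M] {d : ℕ} (f : Equiv.Perm M)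
    (α : MulAut (GL (Fin d) ℝ)) (A : M → GL (Fin d) ℝ) (ν lam : ℝ) : Prop :=
  ∃ ρ θ : ℝ, 0 < ρ ∧ 0 < θ ∧ 5 * ρ + 2 * θ < ν * lam ∧ FiberBunchedWith f α A ρ θ

/-- `H` is the stable holonomy `H^{s,A,α}_{a b}`. -/
def IsStableHol {M : Type*} [MetricSpace M] {d : ℕ} (f : Equiv.Perm M)
    (α : MulAut (GL (Fin d) ℝ)) (A : M → GL (Fin d) ℝ) (a b : M)
    (H : GL (Fin d) ℝ) : Prop :=
  Filter.Tendsto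
    (fun n : ℕ =>
      (((α ^ (-(n : ℤ))) ((twc f α A n b)⁻¹ * twc f α A n a) : GL (Fin d) ℝ) :
        Matrix (Fin d) (Fin d) ℝ))
    Filter.atTop (nhds (H : Matrix (Fin d) (Fin d) ℝ))

/-- `H` is the unstable holonomy `H^{u,A,α}_{a b}`. -/
def IsUnstableHol {M : Type*} [MetricSpace M] {d : ℕ} (f : Equiv.Perm M)
    (α : MulAut (GL (Fin d) ℝ)) (A : M → GL (Fin d) ℝ) (a b : M)
    (H : GL (Fin d) ℝ) : Prop :=
  Filter.Tendsto
    (fun n : ℕ =>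
      (((α ^ (n : ℤ)) ((twc f α A (-(n : ℤ)) b)⁻¹ * twc f α A (-(n : ℤ)) a) :
          GL (Fin d) ℝ) : Matrix (Fin d) (Fin d) ℝ))
    Filter.atTop (nhds (H : Matrix (Fin d) (Fin d) ℝ))

end

noncomputable section

namespace AdaptedNormsAux

lemma coord_le_norm {d : ℕ} (x : EuclideanSpace ℝ (Fin d)) (i : Fin d) : |x i| ≤ ‖x‖ := by
  rw [EuclideanSpace.norm_eq, ← Real.sqrt_sq_eq_abs]
  apply Real.sqrt_le_sqrt
  have := Finset.single_le_sum (f := fun j => ‖x j‖ ^ 2) (fun j _ => sq_nonneg _) (Finset.mem_univ i)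
  simpa [Real.norm_eq_abs, sq_abs] using this

lemma norm_tEL_le {d : ℕ} (Q : Matrix (Fin d) (Fin d) ℝ) (v : EuclideanSpace ℝ (Fin d)) :
    ‖Matrix.toEuclideanLin Q v‖ ≤ ‖Q‖ * ‖v‖ := by
  rw [Matrix.l2_opNorm_def]
  exact ((Matrix.toEuclideanLin.trans LinearMap.toContinuousLinearMap) Q).le_opNorm v

lemma tEL_mul {d : ℕ} (M N : Matrix (Fin d) (Fin d) ℝ) (v : EuclideanSpace ℝ (Fin d)) :
    Matrix.toEuclideanLin (M * N) v = Matrix.toEuclideanLin M (Matrix.toEuclideanLin N v) := by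
  rw [Matrix.toEuclideanLin_eq_toLin, Matrix.toLin_mul _ (PiLp.basisFun 2 ℝ (Fin d)) _]
  rfl

lemma tEL_one {d : ℕ} (v : EuclideanSpace ℝ (Fin d)) :
    Matrix.toEuclideanLin (1 : Matrix (Fin d) (Fin d) ℝ) v = v := by
  rw [Matrix.toEuclideanLin_eq_toLin, Matrix.toLin_one]
  rfl

lemma entry_le_l2norm {d : ℕ} (Q : Matrix (Fin d) (Fin d) ℝ) (i j : Fin d) : |Q i j| ≤ ‖Q‖ := by
  have h0 : Matrix.toEuclideanLin Q (EuclideanSpace.single j 1) i = Q i j := by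
    rw [Matrix.toEuclideanLin_apply, EuclideanSpace.single, PiLp.single,
      WithLp.ofLp_toLp, Matrix.mulVec_single]
    simp
  calc |Q i j| = |Matrix.toEuclideanLin Q (EuclideanSpace.single j 1) i| := by rw [h0]
    _ ≤ ‖Matrix.toEuclideanLin Q (EuclideanSpace.single j (1:ℝ))‖ := coord_le_norm _ i
    _ ≤ ‖Q‖ * ‖EuclideanSpace.single j (1:ℝ)‖ := norm_tEL_le _ _
    _ = ‖Q‖ := by rw [EuclideanSpace.norm_single]; simp

lemma abs_det_le_l2 {d : ℕ} (Q : Matrix (Fin d) (Fin d) ℝ) :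
    |Q.det| ≤ (Nat.factorial d : ℝ) * ‖Q‖ ^ d := by
  rw [Matrix.det_apply]
  calc |∑ σ : Equiv.Perm (Fin d), Equiv.Perm.sign σ • ∏ i, Q (σ i) i|
      ≤ ∑ σ : Equiv.Perm (Fin d), |Equiv.Perm.sign σ • ∏ i, Q (σ i) i| :=
        Finset.abs_sum_le_sum_abs _ _
    _ ≤ ∑ _σ : Equiv.Perm (Fin d), ‖Q‖ ^ d := by
        apply Finset.sum_le_sum
        intro σ _
        rcases Int.units_eq_one_or (Equiv.Perm.sign σ) with h | h <;>
          simp only [h, one_smul, Units.neg_smul, abs_neg] <;>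
        · rw [Finset.abs_prod]
          calc ∏ i, |Q (σ i) i| ≤ ∏ _i : Fin d, ‖Q‖ :=
                Finset.prod_le_prod (fun _ _ => abs_nonneg _) (fun i _ => entry_le_l2norm Q _ _)
            _ = ‖Q‖ ^ d := by simp
    _ = (Nat.factorial d : ℝ) * ‖Q‖ ^ d := by
        rw [Finset.sum_const]
        simp [Fintype.card_perm]

set_option maxHeartbeats 1000000 in
/-- The core analytic construction of the adapted norms. -/
lemma core {d : ℕ} (hd : 0 < d) (ρ θ δ CF : ℝ) (hρ : 0 ≤ ρ) (hθ : 0 ≤ θ) (hδ : 0 < δ)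
    (hCF : 0 < CF) (g : ℕ → GL (Fin d) ℝ)
    (hcond : ∀ j m : ℕ,
      ‖((g (j + m) * (g j)⁻¹ : GL (Fin d) ℝ) : Matrix (Fin d) (Fin d) ℝ)‖ *
        ‖((g j * (g (j + m))⁻¹ : GL (Fin d) ℝ) : Matrix (Fin d) (Fin d) ℝ)‖ ≤
          CF * Real.exp (2 * ρ * j + θ * m)) :
    ∃ (N : ℕ → Seminorm ℝ (EuclideanSpace ℝ (Fin d))) (C' : ℝ), 0 < C' ∧
      (∀ (k : ℕ) (v : EuclideanSpace ℝ (Fin d)),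
        ‖v‖ ≤ N k v ∧ N k v ≤ C' * Real.exp (2 * ρ * k) * ‖v‖) ∧
      (∀ (k : ℕ) (v w : EuclideanSpace ℝ (Fin d)), N k v = 1 → N k w = 1 →
        N (k + 1) (Matrix.toEuclideanLin
            ((g (k + 1) * (g k)⁻¹ : GL (Fin d) ℝ) : Matrix (Fin d) (Fin d) ℝ) v) ≤
          Real.exp (2 * θ + δ) *
            N (k + 1) (Matrix.toEuclideanLin
              ((g (k + 1) * (g k)⁻¹ : GL (Fin d) ℝ) : Matrix (Fin d) (Fin d) ℝ) w)) := by
  classical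
  obtain ⟨β, hβdef⟩ : ∃ β : ℝ, β = θ + δ / 2 := ⟨_, rfl⟩
  have hβpos : 0 < β := by rw [hβdef]; positivity
  obtain ⟨Q, hQdef⟩ : ∃ Q : ℕ → ℕ → Matrix (Fin d) (Fin d) ℝ,
      Q = fun i k => ((g i * (g k)⁻¹ : GL (Fin d) ℝ) : Matrix (Fin d) (Fin d) ℝ) := ⟨_, rfl⟩
  obtain ⟨nr, hnrdef⟩ : ∃ nr : ℕ → ℝ,
      nr = fun j => |((g j : Matrix (Fin d) (Fin d) ℝ)).det| ^ ((d : ℝ)⁻¹) := ⟨_, rfl⟩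
  obtain ⟨c, hcdef⟩ : ∃ c : ℕ → ℕ → ℝ,
      c = fun (k i : ℕ) => Real.exp (-(β * |(i : ℝ) - (k : ℝ)|)) * (nr k / nr i) := ⟨_, rfl⟩
  obtain ⟨trm, htrmdef⟩ : ∃ trm : ℕ → ℕ → EuclideanSpace ℝ (Fin d) → ℝ,
      trm = fun (k i : ℕ) v => c k i * ‖Matrix.toEuclideanLin (Q i k) v‖ := ⟨_, rfl⟩
  -- basic group facts
  have hQmul : ∀ i j k : ℕ, Q i j * Q j k = Q i k := by
    intro i j k
    simp only [hQdef]
    rw [← Units.val_mul]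
    congr 1
    group
  have hQone : ∀ k : ℕ, Q k k = 1 := by
    intro k
    simp only [hQdef]
    rw [mul_inv_cancel, Units.val_one]
  have hdet_pos : ∀ j : ℕ, 0 < |((g j : Matrix (Fin d) (Fin d) ℝ)).det| := by
    intro j
    have h1 : ((g j : Matrix (Fin d) (Fin d) ℝ)) * (((g j)⁻¹ : GL (Fin d) ℝ) :
        Matrix (Fin d) (Fin d) ℝ) = 1 := by
      rw [← Units.val_mul, mul_inv_cancel, Units.val_one]
    have h2 := congrArg Matrix.det h1
    rw [Matrix.det_mul, Matrix.det_one] at h2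
    rcases mul_ne_zero_iff.mp (h2 ▸ one_ne_zero) with ⟨ha, _⟩
    exact abs_pos.mpr ha
  have hnr_pos : ∀ j : ℕ, 0 < nr j := by
    intro j
    simp only [hnrdef]
    exact Real.rpow_pos_of_pos (hdet_pos j) _
  have hc_pos : ∀ k i : ℕ, 0 < c k i := by
    intro k i
    simp only [hcdef]
    exact mul_pos (Real.exp_pos _) (div_pos (hnr_pos k) (hnr_pos i))
  obtain ⟨Kd, hKddef⟩ : ∃ Kd : ℝ, Kd = (Nat.factorial d : ℝ) ^ ((d : ℝ)⁻¹) := ⟨_, rfl⟩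
  have hKd_pos : 0 < Kd := by
    rw [hKddef]
    exact Real.rpow_pos_of_pos (by exact_mod_cast Nat.factorial_pos d) _
  -- determinant ratio bound
  have hdet_inv : ∀ j : ℕ, ((((g j)⁻¹ : GL (Fin d) ℝ) : Matrix (Fin d) (Fin d) ℝ)).det =
      (((g j : Matrix (Fin d) (Fin d) ℝ)).det)⁻¹ := by
    intro j
    have h1 : ((g j : Matrix (Fin d) (Fin d) ℝ)) * (((g j)⁻¹ : GL (Fin d) ℝ) :
        Matrix (Fin d) (Fin d) ℝ) = 1 := by
      rw [← Units.val_mul, mul_inv_cancel, Units.val_one]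
    have h2 := congrArg Matrix.det h1
    rw [Matrix.det_mul, Matrix.det_one] at h2
    exact eq_inv_of_mul_eq_one_right h2
  have hnr_div : ∀ k i : ℕ, nr k / nr i ≤ Kd * ‖Q k i‖ := by
    intro k i
    have hdQ : |(Q k i).det| = |((g k : Matrix (Fin d) (Fin d) ℝ)).det| /
        |((g i : Matrix (Fin d) (Fin d) ℝ)).det| := by
      simp only [hQdef]
      rw [Units.val_mul, Matrix.det_mul, hdet_inv, abs_mul, abs_inv]
      rfl
    have h1 : nr k / nr i = |(Q k i).det| ^ ((d : ℝ)⁻¹) := by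
      simp only [hnrdef]
      rw [hdQ, Real.div_rpow (abs_nonneg _) (abs_nonneg _)]
    rw [h1]
    calc |(Q k i).det| ^ ((d : ℝ)⁻¹)
        ≤ ((Nat.factorial d : ℝ) * ‖Q k i‖ ^ d) ^ ((d : ℝ)⁻¹) := by
          apply Real.rpow_le_rpow (abs_nonneg _) (abs_det_le_l2 _)
          positivity
      _ = Kd * (‖Q k i‖ ^ d) ^ ((d : ℝ)⁻¹) := by
          rw [hKddef, Real.mul_rpow (by positivity) (by positivity)]
      _ = Kd * ‖Q k i‖ := by
          congr 1
          rw [← Real.rpow_natCast ‖Q k i‖ d, ← Real.rpow_mul (norm_nonneg _),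
            mul_inv_cancel₀ (by exact_mod_cast hd.ne'), Real.rpow_one]
  -- condition number bound, symmetric form
  have hcond' : ∀ i k : ℕ, ‖Q i k‖ * ‖Q k i‖ ≤
      CF * Real.exp (2 * ρ * (min i k : ℕ) + θ * |(i : ℝ) - (k : ℝ)|) := by
    intro i k
    rcases le_total k i with h | h
    · obtain ⟨m, rfl⟩ : ∃ m, i = k + m := ⟨i - k, by omega⟩
      have h2 := hcond k m
      have hmin : (min (k + m) k) = k := by omega
      have habs : |((k + m : ℕ) : ℝ) - (k : ℝ)| = (m : ℝ) := by
        push_cast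
        rw [add_sub_cancel_left]
        exact abs_of_nonneg (by positivity)
      rw [hmin, habs]
      simp only [hQdef]
      exact h2
    · obtain ⟨m, rfl⟩ : ∃ m, k = i + m := ⟨k - i, by omega⟩
      have h2 := hcond i m
      have hmin : (min i (i + m)) = i := by omega
      have habs : |(i : ℝ) - ((i + m : ℕ) : ℝ)| = (m : ℝ) := by
        push_cast
        rw [show (i : ℝ) - ((i : ℝ) + (m : ℝ)) = -(m : ℝ) by ring, abs_neg,
          abs_of_nonneg (by positivity)]
      rw [hmin, habs, mul_comm]
      simp only [hQdef]
      exact h2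
  obtain ⟨KK, hKKdef⟩ : ∃ KK : ℝ, KK = Kd * CF := ⟨_, rfl⟩
  have hKK_pos : 0 < KK := by rw [hKKdef]; exact mul_pos hKd_pos hCF
  have hmaster : ∀ (k i : ℕ) (v : EuclideanSpace ℝ (Fin d)),
      trm k i v ≤ KK * Real.exp (2 * ρ * k) * ‖v‖ := by
    intro k i v
    have h1 : ‖Matrix.toEuclideanLin (Q i k) v‖ ≤ ‖Q i k‖ * ‖v‖ := norm_tEL_le _ _
    have h2 : c k i ≤ Real.exp (-(β * |(i:ℝ) - (k:ℝ)|)) * (Kd * ‖Q k i‖) := by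
      simp only [hcdef]
      exact mul_le_mul_of_nonneg_left (hnr_div k i) (Real.exp_pos _).le
    have hβθ : θ ≤ β := by rw [hβdef]; linarith
    calc trm k i v = c k i * ‖Matrix.toEuclideanLin (Q i k) v‖ := by rw [htrmdef]
      _ ≤ (Real.exp (-(β * |(i:ℝ) - (k:ℝ)|)) * (Kd * ‖Q k i‖)) * (‖Q i k‖ * ‖v‖) := by
          apply mul_le_mul h2 h1 (norm_nonneg _)
          positivity
      _ = Kd * (‖Q i k‖ * ‖Q k i‖) * Real.exp (-(β * |(i:ℝ) - (k:ℝ)|)) * ‖v‖ := by ring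
      _ ≤ Kd * (CF * Real.exp (2 * ρ * (min i k : ℕ) + θ * |(i:ℝ) - (k:ℝ)|)) *
            Real.exp (-(β * |(i:ℝ) - (k:ℝ)|)) * ‖v‖ := by
          have h3 := hcond' i k
          gcongr
      _ = KK * (Real.exp (2 * ρ * (min i k : ℕ) + θ * |(i:ℝ) - (k:ℝ)|) *
            Real.exp (-(β * |(i:ℝ) - (k:ℝ)|))) * ‖v‖ := by rw [hKKdef]; ring
      _ = KK * Real.exp ((2 * ρ * (min i k : ℕ) + θ * |(i:ℝ) - (k:ℝ)|) +
            (-(β * |(i:ℝ) - (k:ℝ)|))) * ‖v‖ := by rw [← Real.exp_add]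
      _ ≤ KK * Real.exp (2 * ρ * k) * ‖v‖ := by
          have h5 : ((min i k : ℕ):ℝ) ≤ (k:ℝ) := by exact_mod_cast min_le_right i k
          have h6 : (0:ℝ) ≤ |(i:ℝ) - (k:ℝ)| := abs_nonneg _
          have e1 : 2 * ρ * ((min i k : ℕ):ℝ) ≤ 2 * ρ * (k:ℝ) := by
            apply mul_le_mul_of_nonneg_left h5
            linarith
          have e2 : (θ - β) * |(i:ℝ) - (k:ℝ)| ≤ 0 :=
            mul_nonpos_of_nonpos_of_nonneg (by linarith) h6
          have hexp : (2 * ρ * ((min i k : ℕ):ℝ) + θ * |(i:ℝ) - (k:ℝ)|) +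
              (-(β * |(i:ℝ) - (k:ℝ)|)) ≤ 2 * ρ * (k:ℝ) := by nlinarith [e1, e2]
          gcongr
  have hbdd : ∀ (k : ℕ) (v : EuclideanSpace ℝ (Fin d)),
      BddAbove (Set.range fun i => trm k i v) := by
    intro k v
    refine ⟨KK * Real.exp (2 * ρ * k) * ‖v‖, ?_⟩
    rintro y ⟨i, rfl⟩
    exact hmaster k i v
  have htrm_nonneg : ∀ (k i : ℕ) (v : EuclideanSpace ℝ (Fin d)), 0 ≤ trm k i v := by
    intro k i v
    rw [htrmdef]
    exact mul_nonneg (hc_pos k i).le (norm_nonneg _)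
  obtain ⟨NN, hNNdef⟩ : ∃ NN : ℕ → Seminorm ℝ (EuclideanSpace ℝ (Fin d)),
      NN = fun k => Seminorm.of (fun v => ⨆ i : ℕ, trm k i v)
        (by
          intro v w
          apply ciSup_le
          intro i
          have h1 : trm k i (v + w) ≤ trm k i v + trm k i w := by
            simp only [htrmdef, map_add]
            rw [← mul_add]
            exact mul_le_mul_of_nonneg_left (norm_add_le _ _) (hc_pos k i).le
          exact h1.trans (add_le_add (le_ciSup (hbdd k v) i) (le_ciSup (hbdd k w) i)))
        (by
          intro a v
          have h1 : ∀ i : ℕ, trm k i (a • v) = ‖a‖ * trm k i v := by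
            intro i
            simp only [htrmdef, map_smul, norm_smul]
            ring
          calc (⨆ i : ℕ, trm k i (a • v)) = ⨆ i : ℕ, ‖a‖ * trm k i v := iSup_congr h1
            _ = ‖a‖ * ⨆ i : ℕ, trm k i v :=
                (Real.mul_iSup_of_nonneg (norm_nonneg a) _).symm) := ⟨_, rfl⟩
  have hNN_apply : ∀ (k : ℕ) (v : EuclideanSpace ℝ (Fin d)),
      NN k v = ⨆ i : ℕ, trm k i v := by
    intro k v
    rw [hNNdef]
    rfl
  have htrm_kk : ∀ (k : ℕ) (v : EuclideanSpace ℝ (Fin d)), trm k k v = ‖v‖ := by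
    intro k v
    have hckk : c k k = 1 := by
      simp only [hcdef]
      rw [sub_self, abs_zero, mul_zero, neg_zero, Real.exp_zero, one_mul,
        div_self (hnr_pos k).ne']
    rw [htrmdef]
    show c k k * ‖Matrix.toEuclideanLin (Q k k) v‖ = ‖v‖
    rw [hQone, hckk, tEL_one, one_mul]
  refine ⟨NN, KK + 1, by positivity, ?_, ?_⟩
  · intro k v
    constructor
    · rw [hNN_apply]
      have h1 := le_ciSup (hbdd k v) k
      rw [htrm_kk k v] at h1
      exact h1
    · rw [hNN_apply]
      apply ciSup_le
      intro i
      refine (hmaster k i v).trans ?_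
      have h1 : (0:ℝ) ≤ Real.exp (2 * ρ * k) * ‖v‖ := by positivity
      nlinarith
  · intro k v w hv hw
    have hQview : ((g (k + 1) * (g k)⁻¹ : GL (Fin d) ℝ) : Matrix (Fin d) (Fin d) ℝ) =
        Q (k + 1) k := by rw [hQdef]
    rw [hQview]
    obtain ⟨s, hsdef⟩ : ∃ s : ℝ, s = nr (k + 1) / nr k := ⟨_, rfl⟩
    have hs_pos : 0 < s := by rw [hsdef]; exact div_pos (hnr_pos _) (hnr_pos _)
    have hterm : ∀ (i : ℕ) (u : EuclideanSpace ℝ (Fin d)),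
        trm (k + 1) i (Matrix.toEuclideanLin (Q (k + 1) k) u) =
          c (k + 1) i * ‖Matrix.toEuclideanLin (Q i k) u‖ := by
      intro i u
      rw [htrmdef]
      show c (k + 1) i * ‖Matrix.toEuclideanLin (Q i (k + 1))
        (Matrix.toEuclideanLin (Q (k + 1) k) u)‖ = _
      rw [← tEL_mul, hQmul]
    have hcoef : ∀ i : ℕ, Real.exp (-β) * s * c k i ≤ c (k + 1) i ∧
        c (k + 1) i ≤ Real.exp β * s * c k i := by
      intro i
      have hnrr : nr (k + 1) / nr i = s * (nr k / nr i) := by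
        rw [hsdef, div_mul_div_comm, mul_comm (nr k) (nr i),
          mul_div_mul_right _ _ (hnr_pos k).ne']
      have habs1 : |(i:ℝ) - ((k + 1 : ℕ):ℝ)| ≤ |(i:ℝ) - (k:ℝ)| + 1 := by
        push_cast
        calc |(i:ℝ) - ((k:ℝ) + 1)| = |((i:ℝ) - (k:ℝ)) + (-1)| := by ring_nf
          _ ≤ |(i:ℝ) - (k:ℝ)| + |(-1 : ℝ)| := abs_add_le _ _
          _ = |(i:ℝ) - (k:ℝ)| + 1 := by norm_num
      have habs2 : |(i:ℝ) - (k:ℝ)| ≤ |(i:ℝ) - ((k + 1 : ℕ):ℝ)| + 1 := by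
        push_cast
        calc |(i:ℝ) - (k:ℝ)| = |((i:ℝ) - ((k:ℝ) + 1)) + 1| := by ring_nf
          _ ≤ |(i:ℝ) - ((k:ℝ) + 1)| + |(1 : ℝ)| := abs_add_le _ _
          _ = |(i:ℝ) - ((k:ℝ) + 1)| + 1 := by norm_num
      have hpos2 : (0:ℝ) ≤ s * (nr k / nr i) := by
        have := hnr_pos k
        have := hnr_pos i
        positivity
      have hck : c (k + 1) i = Real.exp (-(β * |(i:ℝ) - ((k + 1 : ℕ):ℝ)|)) *
          (s * (nr k / nr i)) := by
        simp only [hcdef]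
        rw [hnrr]
      constructor
      · have hee : Real.exp (-β) * Real.exp (-(β * |(i:ℝ) - (k:ℝ)|)) ≤
            Real.exp (-(β * |(i:ℝ) - ((k + 1 : ℕ):ℝ)|)) := by
          rw [← Real.exp_add]
          apply Real.exp_le_exp.mpr
          nlinarith [hβpos.le, habs1]
        calc Real.exp (-β) * s * c k i =
            (Real.exp (-β) * Real.exp (-(β * |(i:ℝ) - (k:ℝ)|))) * (s * (nr k / nr i)) := by
              simp only [hcdef]; ring
          _ ≤ Real.exp (-(β * |(i:ℝ) - ((k + 1 : ℕ):ℝ)|)) * (s * (nr k / nr i)) :=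
              mul_le_mul_of_nonneg_right hee hpos2
          _ = c (k + 1) i := hck.symm
      · have hee : Real.exp (-(β * |(i:ℝ) - ((k + 1 : ℕ):ℝ)|)) ≤
            Real.exp β * Real.exp (-(β * |(i:ℝ) - (k:ℝ)|)) := by
          rw [← Real.exp_add]
          apply Real.exp_le_exp.mpr
          nlinarith [hβpos.le, habs2]
        calc c (k + 1) i = Real.exp (-(β * |(i:ℝ) - ((k + 1 : ℕ):ℝ)|)) *
              (s * (nr k / nr i)) := hck
          _ ≤ (Real.exp β * Real.exp (-(β * |(i:ℝ) - (k:ℝ)|))) * (s * (nr k / nr i)) :=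
              mul_le_mul_of_nonneg_right hee hpos2
          _ = Real.exp β * s * c k i := by simp only [hcdef]; ring
    have hub : NN (k + 1) (Matrix.toEuclideanLin (Q (k + 1) k) v) ≤ Real.exp β * s := by
      rw [hNN_apply]
      apply ciSup_le
      intro i
      rw [hterm i v]
      calc c (k + 1) i * ‖Matrix.toEuclideanLin (Q i k) v‖
          ≤ (Real.exp β * s * c k i) * ‖Matrix.toEuclideanLin (Q i k) v‖ :=
            mul_le_mul_of_nonneg_right (hcoef i).2 (norm_nonneg _)
        _ = (Real.exp β * s) * trm k i v := by rw [htrmdef]; ring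
        _ ≤ (Real.exp β * s) * (NN k v) := by
            refine mul_le_mul_of_nonneg_left ?_ (by positivity)
            rw [hNN_apply]
            exact le_ciSup (hbdd k v) i
        _ = Real.exp β * s := by rw [hv, mul_one]
    have hlb : Real.exp (-β) * s ≤ NN (k + 1) (Matrix.toEuclideanLin (Q (k + 1) k) w) := by
      have h0 : Real.exp (-β) * s = ⨆ i : ℕ, (Real.exp (-β) * s) * trm k i w := by
        rw [← Real.mul_iSup_of_nonneg (by positivity : (0:ℝ) ≤ Real.exp (-β) * s),
          ← hNN_apply, hw, mul_one]
      rw [hNN_apply, h0]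
      apply ciSup_mono (hbdd (k + 1) _)
      intro i
      rw [hterm i w]
      calc (Real.exp (-β) * s) * trm k i w =
            (Real.exp (-β) * s * c k i) * ‖Matrix.toEuclideanLin (Q i k) w‖ := by
              rw [htrmdef]; ring
        _ ≤ c (k + 1) i * ‖Matrix.toEuclideanLin (Q i k) w‖ :=
            mul_le_mul_of_nonneg_right (hcoef i).1 (norm_nonneg _)
    calc NN (k + 1) (Matrix.toEuclideanLin (Q (k + 1) k) v) ≤ Real.exp β * s := hub
      _ = Real.exp (2 * θ + δ) * (Real.exp (-β) * s) := by
          rw [← mul_assoc, ← Real.exp_add]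
          congr 2
          rw [hβdef]; ring
      _ ≤ Real.exp (2 * θ + δ) * NN (k + 1) (Matrix.toEuclideanLin (Q (k + 1) k) w) :=
          mul_le_mul_of_nonneg_left hlb (Real.exp_pos _).le


lemma twc_natCast {M G : Type*} [Group G] (f : Equiv.Perm M) (α : MulAut G) (A : M → G)
    (m : ℕ) (x : M) : twc f α A (m : ℤ) x = twcN f α A m x := rfl

lemma twcN_add {M G : Type*} [Group G] (f : Equiv.Perm M) (α : MulAut G) (A : M → G)
    (m j : ℕ) (x : M) :
    twcN f α A (m + j) x = twcN f α A m ((f ^ j) x) * (α ^ m) (twcN f α A j x) := by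
  induction m with
  | zero => simp [twcN]
  | succ m ih =>
    have h1 : m + 1 + j = (m + j) + 1 := by omega
    rw [h1]
    show A ((f ^ (m + j)) x) * α (twcN f α A (m + j) x) = _
    rw [ih, map_mul]
    have hpt : (f ^ (m + j)) x = (f ^ m) ((f ^ j) x) := by
      rw [pow_add]; rfl
    have hα : α ((α ^ m) (twcN f α A j x)) = (α ^ (m + 1)) (twcN f α A j x) := by
      rw [pow_succ']; rfl
    rw [hpt, hα, ← mul_assoc]
    rfl

lemma mulaut_comp {G : Type*} [Group G] (α : MulAut G) (z w : ℤ) (S : G) :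
    (α ^ z) ((α ^ w) S) = (α ^ (z + w)) S := by
  rw [zpow_add]; rfl

lemma gblock {M G : Type*} [Group G] (f : Equiv.Perm M) (α : MulAut G) (A : M → G) (x : M)
    (j m : ℕ) :
    (α ^ (-(↑(j + m) : ℤ))) (twcN f α A (j + m) x) =
      (α ^ (-(j : ℤ))) ((α ^ (-(m : ℤ))) (twcN f α A m ((f ^ j) x))) *
        (α ^ (-(j : ℤ))) (twcN f α A j x) := by
  rw [Nat.add_comm j m, twcN_add, map_mul, mulaut_comp, ← zpow_natCast α m, mulaut_comp,
    show (-(j : ℤ) + -(m : ℤ)) = -(↑(m + j) : ℤ) by push_cast; ring,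
    show (-(↑(m + j) : ℤ) + (m : ℤ)) = -(j : ℤ) by push_cast; ring]

lemma gstep {M G : Type*} [Group G] (f : Equiv.Perm M) (α : MulAut G) (A : M → G) (x : M)
    (k : ℕ) :
    (α ^ (-(↑(k + 1) : ℤ))) (twcN f α A (k + 1) x) =
      (α ^ (-(k + 1 : ℤ))) (A ((f ^ k) x)) * (α ^ (-(k : ℤ))) (twcN f α A k x) := by
  show (α ^ (-(↑(k + 1) : ℤ))) (A ((f ^ k) x) * α (twcN f α A k x)) = _
  rw [map_mul, show α (twcN f α A k x) = (α ^ (1 : ℤ)) (twcN f α A k x) from rfl, mulaut_comp,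
    show (-(↑(k + 1) : ℤ) + 1) = -(k : ℤ) by push_cast; ring,
    show (-(↑(k + 1) : ℤ)) = (-(k + 1 : ℤ)) by push_cast; ring]


end AdaptedNormsAux

end

set_option maxHeartbeats 1000000 in
/-- **Lemma (adapted family of norms).** There is a family of norms `‖·‖_k` on `ℝ^d` with
`‖v‖ ≤ ‖v‖_k ≤ C e^{2ρk}‖v‖` such that for every `k ≥ 1` the ratio of the maximum to the
minimum of `‖α^{-k}(A(f^{k-1}(x)))v‖_k` over the unit sphere of `‖·‖_{k-1}` is at most
`e^{2θ+δ}`. -/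
theorem adapted_norms_exist {M : Type*} [MetricSpace M] [CompactSpace M] {d : ℕ}
    (f : M ≃ₜ M) (C ε lam τ ν : ℝ) (hν : 0 < ν)
    (hf : IsHyperbolicLPS f C ε lam τ)
    (A : M → GL (Fin d) ℝ) (α : MulAut (GL (Fin d) ℝ))
    (hA : IsHolder ν A) (ρ θ δ : ℝ) (hρ : 0 < ρ) (hθ : 0 < θ) (hδ : 0 < δ)
    (hFB : FiberBunchedWith f.toEquiv α A ρ θ)
    (hlt : 5 * ρ + 2 * θ + δ < lam * ν) (x : M) :
    ∃ (N : ℕ → Seminorm ℝ (EuclideanSpace ℝ (Fin d))) (C' : ℝ), 0 < C' ∧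
      (∀ (k : ℕ) (v : EuclideanSpace ℝ (Fin d)),
        ‖v‖ ≤ N k v ∧ N k v ≤ C' * Real.exp (2 * ρ * k) * ‖v‖) ∧
      (∀ (k : ℕ) (v w : EuclideanSpace ℝ (Fin d)), N k v = 1 → N k w = 1 →
        N (k + 1) (Matrix.toEuclideanLin
            ((((α ^ (-(k + 1 : ℤ))) (A ((f.toEquiv ^ (k : ℤ)) x))) :
              Matrix (Fin d) (Fin d) ℝ) : Matrix (Fin d) (Fin d) ℝ) v) ≤
          Real.exp (2 * θ + δ) *
            N (k + 1) (Matrix.toEuclideanLin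
              ((((α ^ (-(k + 1 : ℤ))) (A ((f.toEquiv ^ (k : ℤ)) x))) :
                Matrix (Fin d) (Fin d) ℝ) : Matrix (Fin d) (Fin d) ℝ) w)) := by
  classical
  obtain ⟨CF, hCF, hfb1, _hfb2, hfb3⟩ := hFB
  rcases Nat.eq_zero_or_pos d with hd | hd
  · subst hd
    refine ⟨fun _ => 0, 1, one_pos, ?_, ?_⟩
    · intro k v
      have hv : v = (0 : EuclideanSpace ℝ (Fin 0)) := Subsingleton.elim _ _
      subst hv
      constructor
      · simp
      · simp
    · intro k v w hv _
      have h0 : (0 : Seminorm ℝ (EuclideanSpace ℝ (Fin 0))) v = 0 := rfl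
      rw [h0] at hv
      norm_num at hv
  · obtain ⟨g, hgdef⟩ : ∃ g : ℕ → GL (Fin d) ℝ,
        g = fun (j : ℕ) => (α ^ (-(j : ℤ))) (twcN f.toEquiv α A j x) := ⟨_, rfl⟩
    have hcnd : ∀ j m : ℕ,
        ‖((g (j + m) * (g j)⁻¹ : GL (Fin d) ℝ) : Matrix (Fin d) (Fin d) ℝ)‖ *
          ‖((g j * (g (j + m))⁻¹ : GL (Fin d) ℝ) : Matrix (Fin d) (Fin d) ℝ)‖ ≤
            (CF ^ 3) * Real.exp (2 * ρ * j + θ * m) := by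
      intro j m
      obtain ⟨R, hRdef⟩ : ∃ R : GL (Fin d) ℝ,
          R = (α ^ (-(m : ℤ))) (twcN f.toEquiv α A m ((f.toEquiv ^ j) x)) := ⟨_, rfl⟩
      have hb1 : g (j + m) * (g j)⁻¹ = (α ^ (-(j : ℤ))) R := by
        rw [hgdef, hRdef]
        show (α ^ (-(↑(j + m) : ℤ))) (twcN f.toEquiv α A (j + m) x) *
            ((α ^ (-(j : ℤ))) (twcN f.toEquiv α A j x))⁻¹ = _
        rw [AdaptedNormsAux.gblock f.toEquiv α A x j m, mul_inv_cancel_right]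
      have hb2 : g j * (g (j + m))⁻¹ = (α ^ (-(j : ℤ))) R⁻¹ := by
        rw [map_inv, ← hb1, mul_inv_rev, inv_inv]
      have h3 : ‖(((α ^ (-(j : ℤ))) R : GL (Fin d) ℝ) : Matrix (Fin d) (Fin d) ℝ)‖ ≤
          CF * Real.exp (ρ * j) * ‖(R : Matrix (Fin d) (Fin d) ℝ)‖ := by
        have h := hfb3 (-(j : ℤ)) R
        rwa [show |((-(j : ℤ) : ℤ) : ℝ)| = (j : ℝ) by
          push_cast; rw [abs_neg]; exact abs_of_nonneg (by positivity)] at h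
      have h4 : ‖(((α ^ (-(j : ℤ))) R⁻¹ : GL (Fin d) ℝ) : Matrix (Fin d) (Fin d) ℝ)‖ ≤
          CF * Real.exp (ρ * j) * ‖((R⁻¹ : GL (Fin d) ℝ) : Matrix (Fin d) (Fin d) ℝ)‖ := by
        have h := hfb3 (-(j : ℤ)) R⁻¹
        rwa [show |((-(j : ℤ) : ℤ) : ℝ)| = (j : ℝ) by
          push_cast; rw [abs_neg]; exact abs_of_nonneg (by positivity)] at h
      have h5 : ‖(R : Matrix (Fin d) (Fin d) ℝ)‖ *
          ‖((R⁻¹ : GL (Fin d) ℝ) : Matrix (Fin d) (Fin d) ℝ)‖ ≤ CF * Real.exp (θ * m) := by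
        have h := hfb1 (m : ℤ) ((f.toEquiv ^ j) x)
        rw [AdaptedNormsAux.twc_natCast, map_inv, ← hRdef] at h
        rw [show |(((m : ℤ)) : ℝ)| = (m : ℝ) by
          push_cast; exact abs_of_nonneg (by positivity)] at h
        exact h.le
      calc ‖((g (j + m) * (g j)⁻¹ : GL (Fin d) ℝ) : Matrix (Fin d) (Fin d) ℝ)‖ *
            ‖((g j * (g (j + m))⁻¹ : GL (Fin d) ℝ) : Matrix (Fin d) (Fin d) ℝ)‖ =
            ‖(((α ^ (-(j : ℤ))) R : GL (Fin d) ℝ) : Matrix (Fin d) (Fin d) ℝ)‖ *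
            ‖(((α ^ (-(j : ℤ))) R⁻¹ : GL (Fin d) ℝ) : Matrix (Fin d) (Fin d) ℝ)‖ := by
              rw [hb1, hb2]
        _ ≤ (CF * Real.exp (ρ * j) * ‖(R : Matrix (Fin d) (Fin d) ℝ)‖) *
            (CF * Real.exp (ρ * j) *
              ‖((R⁻¹ : GL (Fin d) ℝ) : Matrix (Fin d) (Fin d) ℝ)‖) := by
              apply mul_le_mul h3 h4 (norm_nonneg _)
              positivity
        _ = (CF * CF * (Real.exp (ρ * j) * Real.exp (ρ * j))) *
            (‖(R : Matrix (Fin d) (Fin d) ℝ)‖ *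
              ‖((R⁻¹ : GL (Fin d) ℝ) : Matrix (Fin d) (Fin d) ℝ)‖) := by ring
        _ ≤ (CF * CF * (Real.exp (ρ * j) * Real.exp (ρ * j))) *
            (CF * Real.exp (θ * m)) := by
              apply mul_le_mul_of_nonneg_left h5
              positivity
        _ = CF ^ 3 * (Real.exp (ρ * j) * Real.exp (ρ * j) * Real.exp (θ * m)) := by ring
        _ = CF ^ 3 * Real.exp (2 * ρ * j + θ * m) := by
              rw [← Real.exp_add, ← Real.exp_add]
              congr 1
              ring
    obtain ⟨N, C', hC', ha, hb⟩ := AdaptedNormsAux.core hd ρ θ δ (CF ^ 3) hρ.le hθ.le hδ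
      (by positivity) g hcnd
    refine ⟨N, C', hC', ha, ?_⟩
    intro k v w hv hw
    have hstep : (g (k + 1) * (g k)⁻¹ : GL (Fin d) ℝ) =
        (α ^ (-(k + 1 : ℤ))) (A ((f.toEquiv ^ (k : ℤ)) x)) := by
      rw [hgdef]
      show (α ^ (-(↑(k + 1) : ℤ))) (twcN f.toEquiv α A (k + 1) x) *
          ((α ^ (-(k : ℤ))) (twcN f.toEquiv α A k x))⁻¹ = _
      rw [AdaptedNormsAux.gstep f.toEquiv α A x k, mul_inv_cancel_right, zpow_natCast]
    have h := hb k v w hv hw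
    rw [hstep] at h
    exact h
end

section
/- Let f : M → M be a hyperbolic homeomorphism with local product structure on a compact metric space (M,d), let A : M → GL(d,ℝ) be ν-Hölder continuous, α an automorphism of GL(d,ℝ), suppose the α-twisted cocycle A_α is fiber-bunched with constants ρ, θ, and let δ > 0 satisfy 5ρ + 2θ + δ < λν. Fix x ∈ M. Then there exists a family of norms (‖·‖_k)_{k∈ℕ} on ℝ^d, with ‖v‖ ≤ ‖v‖_k ≤ C e^{2ρk} ‖v‖ for a constant C depending only on A, α, f, δ, such that for every k ≥ 1 the matrix T_k := α^{-k}(A(f^{k-1}(x))) satisfies (sup_{v≠0} ‖T_k v‖_k / ‖v‖_{k-1}) · (sup_{v≠0} ‖T_k^{-1} v‖_{k-1} / ‖v‖_k) ≤ e^{2θ + δ}. -/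
open scoped Matrix.Norms.L2Operator

noncomputable section
namespace AdaptedAux

variable {M G : Type*} [Group G] (f : Equiv.Perm M) (α : MulAut G) (A : M → G)

lemma twc_natCast (m : ℕ) (y : M) : twc f α A (m : ℤ) y = twcN f α A m y := rfl

lemma twcN_add (x : M) (j : ℕ) : ∀ m : ℕ, twcN f α A (m + j) x
    = twcN f α A m ((f ^ j) x) * (α ^ m) (twcN f α A j x)
  | 0 => by simp [twcN]
  | m + 1 => by
    have h : m + 1 + j = (m + j) + 1 := by ring
    rw [h]
    show A ((f ^ (m+j)) x) * α (twcN f α A (m+j) x) = _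
    rw [twcN_add x j m]
    show A ((f ^ (m+j)) x) * α (twcN f α A m ((f ^ j) x) * (α ^ m) (twcN f α A j x)) = _
    rw [map_mul]
    have h2 : (f ^ (m + j)) x = (f ^ m) ((f ^ j) x) := by
      rw [pow_add, Equiv.Perm.mul_apply]
    have h3 : α ((α ^ m) (twcN f α A j x)) = (α ^ (m+1)) (twcN f α A j x) := by
      rw [pow_succ']; rfl
    rw [h2, h3, ← mul_assoc]
    rfl

/-- `P x k = α^{-k}(A_α^k(x))`. -/
def P (x : M) (k : ℕ) : G := (α ^ (-(k:ℤ))) (twcN f α A k x)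

lemma P_block (x : M) (j m : ℕ) :
    P f α A x (m + j) * (P f α A x j)⁻¹
      = (α ^ (-(j:ℤ))) ((α ^ (-(m:ℤ))) (twcN f α A m ((f ^ j) x))) := by
  unfold P
  rw [twcN_add, map_mul]
  have h1 : (α ^ (-((m+j : ℕ):ℤ))) ((α ^ m) (twcN f α A j x)) = (α ^ (-(j:ℤ))) (twcN f α A j x) := by
    have : (α ^ (-((m+j : ℕ):ℤ))) ((α ^ (m:ℤ)) (twcN f α A j x))
        = ((α ^ (-((m+j : ℕ):ℤ))) * (α ^ (m:ℤ))) (twcN f α A j x) := rfl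
    rw [← zpow_natCast α m] at *
    rw [this, ← zpow_add]
    congr 1
    push_cast
    ring
  have h2 : (α ^ (-((m+j : ℕ):ℤ))) (twcN f α A m ((f ^ j) x))
      = (α ^ (-(j:ℤ))) ((α ^ (-(m:ℤ))) (twcN f α A m ((f ^ j) x))) := by
    have : (α ^ (-(j:ℤ))) ((α ^ (-(m:ℤ))) (twcN f α A m ((f ^ j) x)))
        = ((α ^ (-(j:ℤ))) * (α ^ (-(m:ℤ)))) (twcN f α A m ((f ^ j) x)) := rfl
    rw [this, ← zpow_add]
    congr 2
    push_cast
    ring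
  rw [h1, h2, mul_assoc, mul_inv_cancel, mul_one]

lemma P_succ (x : M) (k : ℕ) :
    P f α A x (k + 1) = (α ^ (-(k+1:ℤ))) (A ((f ^ k) x)) * P f α A x k := by
  unfold P
  have e : twcN f α A (k+1) x = A ((f ^ k) x) * α (twcN f α A k x) := rfl
  rw [e, map_mul]
  have hc : (-((k+1:ℕ):ℤ)) = -(k+1:ℤ) := by push_cast; ring
  rw [hc]
  congr 1
  have h1 : (α ^ (-(k+1:ℤ))) (α (twcN f α A k x))
      = ((α ^ (-(k+1:ℤ))) * (α ^ (1:ℤ))) (twcN f α A k x) := by rw [zpow_one]; rfl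
  rw [h1, ← zpow_add]
  norm_num

end AdaptedAux

namespace AdaptedAux

variable {M : Type*} {d : ℕ}

/-- matrix norm of a GL element -/
def nmG (X : GL (Fin d) ℝ) : ℝ := ‖(X : Matrix (Fin d) (Fin d) ℝ)‖

lemma nmG_nonneg (X : GL (Fin d) ℝ) : 0 ≤ nmG X := norm_nonneg _

lemma nmG_pos (hd : 0 < d) (X : GL (Fin d) ℝ) : 0 < nmG X := by
  haveI : Nonempty (Fin d) := ⟨⟨0, hd⟩⟩
  rw [nmG, norm_pos_iff]
  intro h
  have h1 : (X : Matrix (Fin d) (Fin d) ℝ) * ((X⁻¹ : GL (Fin d) ℝ) : Matrix (Fin d) (Fin d) ℝ) = 1 := by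
    exact_mod_cast Units.mul_inv X
  rw [h, zero_mul] at h1
  exact one_ne_zero h1.symm

lemma nmG_mul_le (X Y : GL (Fin d) ℝ) : nmG (X * Y) ≤ nmG X * nmG Y :=
  Matrix.l2_opNorm_mul _ _

/-- The fundamental product bound for blocks of the twisted cocycle. -/
lemma prod_bound (f : Equiv.Perm M) (α : MulAut (GL (Fin d) ℝ)) (A : M → GL (Fin d) ℝ)
    (K ρ θ : ℝ) (hK : 0 < K)
    (h1 : ∀ (n : ℤ) (y : M),
      nmG ((α ^ (-n)) (twc f α A n y)) * nmG ((α ^ (-n)) ((twc f α A n y)⁻¹))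
        < K * Real.exp (θ * |(n : ℝ)|))
    (h3 : ∀ (n : ℤ) (T : GL (Fin d) ℝ),
      nmG ((α ^ n) T) ≤ K * Real.exp (ρ * |(n : ℝ)|) * nmG T)
    (x : M) (j m : ℕ) :
    nmG (P f α A x (m+j) * (P f α A x j)⁻¹) * nmG (P f α A x j * (P f α A x (m+j))⁻¹)
      ≤ K^3 * Real.exp (2*ρ*j + θ*m) := by
  set Q : GL (Fin d) ℝ := (α ^ (-(m:ℤ))) (twcN f α A m ((f ^ j) x)) with hQ
  have hPQ : P f α A x (m+j) * (P f α A x j)⁻¹ = (α ^ (-(j:ℤ))) Q := P_block f α A x j m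
  have hPQ' : P f α A x j * (P f α A x (m+j))⁻¹ = (α ^ (-(j:ℤ))) Q⁻¹ := by
    have : P f α A x j * (P f α A x (m+j))⁻¹ = (P f α A x (m+j) * (P f α A x j)⁻¹)⁻¹ := by
      rw [mul_inv_rev, inv_inv]
    rw [this, hPQ, ← map_inv]
  have habs : |((-(j:ℤ) : ℤ) : ℝ)| = (j : ℝ) := by
    push_cast; rw [abs_neg, abs_of_nonneg (by positivity)]
  have b1 : nmG ((α ^ (-(j:ℤ))) Q) ≤ K * Real.exp (ρ * j) * nmG Q := by
    have := h3 (-(j:ℤ)) Q; rwa [habs] at this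
  have b2 : nmG ((α ^ (-(j:ℤ))) Q⁻¹) ≤ K * Real.exp (ρ * j) * nmG Q⁻¹ := by
    have := h3 (-(j:ℤ)) Q⁻¹; rwa [habs] at this
  have b3 : nmG Q * nmG Q⁻¹ ≤ K * Real.exp (θ * m) := by
    have := h1 (m:ℤ) ((f ^ j) x)
    rw [twc_natCast] at this
    have habs2 : |(((m:ℤ) : ℤ) : ℝ)| = (m : ℝ) := by push_cast; rw [abs_of_nonneg (by positivity)]
    rw [habs2] at this
    have hmap : (α ^ (-(m:ℤ))) ((twcN f α A m ((f ^ j) x))⁻¹) = Q⁻¹ := by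
      rw [map_inv, hQ]
    rw [hmap] at this
    exact le_of_lt (by exact_mod_cast this)
  rw [hPQ, hPQ']
  calc nmG ((α ^ (-(j:ℤ))) Q) * nmG ((α ^ (-(j:ℤ))) Q⁻¹)
      ≤ (K * Real.exp (ρ * j) * nmG Q) * (K * Real.exp (ρ * j) * nmG Q⁻¹) := by
        exact mul_le_mul b1 b2 (nmG_nonneg _) (mul_nonneg (by positivity) (nmG_nonneg _))
    _ = (K * Real.exp (ρ * j)) * (K * Real.exp (ρ * j)) * (nmG Q * nmG Q⁻¹) := by ring
    _ ≤ (K * Real.exp (ρ * j)) * (K * Real.exp (ρ * j)) * (K * Real.exp (θ * m)) := by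
        apply mul_le_mul_of_nonneg_left b3 (by positivity)
    _ = K^3 * Real.exp (2*ρ*j + θ*m) := by
        rw [Real.exp_add, show (2:ℝ)*ρ*(j:ℝ) = ρ*j + ρ*j by ring, Real.exp_add]; ring

end AdaptedAux

end

noncomputable section
namespace AdaptedAux2
variable {d : ℕ}

lemma tEL_mul (Mt Nt : Matrix (Fin d) (Fin d) ℝ) (v : EuclideanSpace ℝ (Fin d)) :
    Matrix.toEuclideanLin (Mt * Nt) v = Matrix.toEuclideanLin Mt (Matrix.toEuclideanLin Nt v) := by
  simp [Matrix.toEuclideanLin_apply, Matrix.mulVec_mulVec]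

lemma tEL_one (v : EuclideanSpace ℝ (Fin d)) :
    Matrix.toEuclideanLin (1 : Matrix (Fin d) (Fin d) ℝ) v = v := by
  simp [Matrix.toEuclideanLin_apply]

/-- generic seminorm family construction -/
def pS (Q : ℕ → GL (Fin d) ℝ) (a : ℝ) (j k : ℕ) : Seminorm ℝ (EuclideanSpace ℝ (Fin d)) :=
  (Real.exp (-(a * |(k:ℝ) - (j:ℝ)|)) / ‖(Q j : Matrix (Fin d) (Fin d) ℝ)‖).toNNReal •
    (normSeminorm ℝ (EuclideanSpace ℝ (Fin d))).comp
      (Matrix.toEuclideanLin ((Q j : Matrix (Fin d) (Fin d) ℝ)))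

def ntS (Q : ℕ → GL (Fin d) ℝ) (a : ℝ) (k : ℕ) : Seminorm ℝ (EuclideanSpace ℝ (Fin d)) :=
  ⨆ j, pS Q a j k

def NS (Q : ℕ → GL (Fin d) ℝ) (a : ℝ) (k : ℕ) : Seminorm ℝ (EuclideanSpace ℝ (Fin d)) :=
  ‖(Q k : Matrix (Fin d) (Fin d) ℝ)‖.toNNReal •
    (ntS Q a k).comp (Matrix.toEuclideanLin (((Q k)⁻¹ : GL (Fin d) ℝ) : Matrix (Fin d) (Fin d) ℝ))

variable (Q : ℕ → GL (Fin d) ℝ) (a : ℝ)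

lemma ratio_helper {c1 c2 e n : ℝ} (h : c2 ≠ 0) : e * (c1 / c2) * (c2 * n) = c1 * (e * n) := by
  field_simp

lemma tEL_norm (Mt : Matrix (Fin d) (Fin d) ℝ) (v : EuclideanSpace ℝ (Fin d)) :
    ‖Matrix.toEuclideanLin Mt v‖ ≤ ‖Mt‖ * ‖v‖ := Matrix.l2_opNorm_mulVec Mt v

lemma pS_apply (j k : ℕ) (v : EuclideanSpace ℝ (Fin d)) :
    pS Q a j k v = (Real.exp (-(a * |(k:ℝ) - (j:ℝ)|)) / ‖(Q j : Matrix (Fin d) (Fin d) ℝ)‖) *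
      ‖Matrix.toEuclideanLin ((Q j : Matrix (Fin d) (Fin d) ℝ)) v‖ := by
  rw [pS, Seminorm.smul_apply, NNReal.smul_def, Real.coe_toNNReal _ (by positivity)]
  rfl

variable (hQ : ∀ j, 0 < ‖(Q j : Matrix (Fin d) (Fin d) ℝ)‖) (ha : 0 ≤ a)
include hQ ha

lemma pS_le (j k : ℕ) (v : EuclideanSpace ℝ (Fin d)) : pS Q a j k v ≤ ‖v‖ := by
  rw [pS_apply]
  have h1 : ‖Matrix.toEuclideanLin ((Q j : Matrix (Fin d) (Fin d) ℝ)) v‖ ≤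
      ‖(Q j : Matrix (Fin d) (Fin d) ℝ)‖ * ‖v‖ := tEL_norm _ v
  calc (Real.exp (-(a * |(k:ℝ) - (j:ℝ)|)) / ‖(Q j : Matrix (Fin d) (Fin d) ℝ)‖) *
      ‖Matrix.toEuclideanLin ((Q j : Matrix (Fin d) (Fin d) ℝ)) v‖
      ≤ (Real.exp (-(a * |(k:ℝ) - (j:ℝ)|)) / ‖(Q j : Matrix (Fin d) (Fin d) ℝ)‖) *
        (‖(Q j : Matrix (Fin d) (Fin d) ℝ)‖ * ‖v‖) :=
        mul_le_mul_of_nonneg_left h1 (by positivity)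
    _ = Real.exp (-(a * |(k:ℝ) - (j:ℝ)|)) * ‖v‖ := by
        rw [div_mul_eq_mul_div, mul_comm (‖((Q j : GL (Fin d) ℝ) : Matrix (Fin d) (Fin d) ℝ)‖) ‖v‖,
          ← mul_assoc, mul_div_assoc,
          div_self (ne_of_gt (hQ j)), mul_one]
    _ ≤ 1 * ‖v‖ := by
        apply mul_le_mul_of_nonneg_right _ (norm_nonneg v)
        rw [Real.exp_le_one_iff]
        have : 0 ≤ a * |(k:ℝ) - (j:ℝ)| := by positivity
        linarith
    _ = ‖v‖ := one_mul _

lemma bddr (k : ℕ) (v : EuclideanSpace ℝ (Fin d)) :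
    BddAbove (Set.range fun j => pS Q a j k v) := by
  refine ⟨‖v‖, ?_⟩
  rintro r ⟨j, rfl⟩
  exact pS_le Q a hQ ha j k v

lemma bddS (k : ℕ) : BddAbove (Set.range fun j => pS Q a j k) :=
  Seminorm.bddAbove_range_iff.mpr fun v => bddr Q a hQ ha k v

lemma ntS_apply (k : ℕ) (v : EuclideanSpace ℝ (Fin d)) :
    ntS Q a k v = ⨆ j, pS Q a j k v := Seminorm.iSup_apply (bddS Q a hQ ha k)

lemma pS_le_ntS (j k : ℕ) (v : EuclideanSpace ℝ (Fin d)) : pS Q a j k v ≤ ntS Q a k v := by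
  rw [ntS_apply Q a hQ ha]
  exact le_ciSup (bddr Q a hQ ha k v) j

lemma ntS_shift (k₁ k₂ : ℕ) (hk : |(k₁:ℝ) - (k₂:ℝ)| ≤ 1) (v : EuclideanSpace ℝ (Fin d)) :
    ntS Q a k₁ v ≤ Real.exp a * ntS Q a k₂ v := by
  rw [ntS_apply Q a hQ ha k₁]
  refine ciSup_le fun j => ?_
  have hcoef : Real.exp (-(a * |(k₁:ℝ) - (j:ℝ)|)) ≤
      Real.exp a * Real.exp (-(a * |(k₂:ℝ) - (j:ℝ)|)) := by
    rw [← Real.exp_add, Real.exp_le_exp]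
    have h2 : |(k₂:ℝ) - (j:ℝ)| ≤ |(k₂:ℝ) - (k₁:ℝ)| + |(k₁:ℝ) - (j:ℝ)| := abs_sub_le _ _ _
    have h3 : |(k₂:ℝ) - (k₁:ℝ)| = |(k₁:ℝ) - (k₂:ℝ)| := abs_sub_comm _ _
    nlinarith [abs_nonneg ((k₁:ℝ) - (j:ℝ)), abs_nonneg ((k₂:ℝ) - (j:ℝ))]
  have h4 : pS Q a j k₁ v ≤ Real.exp a * pS Q a j k₂ v := by
    rw [pS_apply, pS_apply]
    calc (Real.exp (-(a * |(k₁:ℝ) - (j:ℝ)|)) / ‖(Q j : Matrix (Fin d) (Fin d) ℝ)‖) *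
        ‖Matrix.toEuclideanLin ((Q j : Matrix (Fin d) (Fin d) ℝ)) v‖
        ≤ ((Real.exp a * Real.exp (-(a * |(k₂:ℝ) - (j:ℝ)|))) / ‖(Q j : Matrix (Fin d) (Fin d) ℝ)‖) *
          ‖Matrix.toEuclideanLin ((Q j : Matrix (Fin d) (Fin d) ℝ)) v‖ := by
          exact mul_le_mul_of_nonneg_right ((div_le_div_iff_of_pos_right (hQ j)).mpr hcoef) (norm_nonneg _)
      _ = Real.exp a * ((Real.exp (-(a * |(k₂:ℝ) - (j:ℝ)|)) / ‖(Q j : Matrix (Fin d) (Fin d) ℝ)‖) *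
          ‖Matrix.toEuclideanLin ((Q j : Matrix (Fin d) (Fin d) ℝ)) v‖) := by ring
  exact h4.trans (mul_le_mul_of_nonneg_left (pS_le_ntS Q a hQ ha j k₂ v) (Real.exp_pos a).le)

omit hQ ha in
lemma NS_apply (k : ℕ) (v : EuclideanSpace ℝ (Fin d)) :
    NS Q a k v = ‖(Q k : Matrix (Fin d) (Fin d) ℝ)‖ *
      ntS Q a k (Matrix.toEuclideanLin (((Q k)⁻¹ : GL (Fin d) ℝ) : Matrix (Fin d) (Fin d) ℝ) v) := by
  rw [NS, Seminorm.smul_apply, NNReal.smul_def, Real.coe_toNNReal _ (norm_nonneg _)]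
  rfl


lemma NS_lower (k : ℕ) (v : EuclideanSpace ℝ (Fin d)) : ‖v‖ ≤ NS Q a k v := by
  rw [NS_apply]
  set u := Matrix.toEuclideanLin (((Q k)⁻¹ : GL (Fin d) ℝ) : Matrix (Fin d) (Fin d) ℝ) v with hu
  have h0 : Matrix.toEuclideanLin ((Q k : Matrix (Fin d) (Fin d) ℝ)) u = v := by
    rw [hu, ← tEL_mul]
    have h1 : (Q k : Matrix (Fin d) (Fin d) ℝ) * (((Q k)⁻¹ : GL (Fin d) ℝ) : Matrix (Fin d) (Fin d) ℝ)
        = 1 := by exact_mod_cast Units.mul_inv (Q k)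
    rw [h1, tEL_one]
  have hterm : pS Q a k k u = (1 / ‖(Q k : Matrix (Fin d) (Fin d) ℝ)‖) * ‖v‖ := by
    rw [pS_apply, h0]
    norm_num
  have h2 : (1 / ‖(Q k : Matrix (Fin d) (Fin d) ℝ)‖) * ‖v‖ ≤ ntS Q a k u :=
    hterm ▸ pS_le_ntS Q a hQ ha k k u
  have h3 : ‖v‖ = ‖(Q k : Matrix (Fin d) (Fin d) ℝ)‖ *
      ((1 / ‖(Q k : Matrix (Fin d) (Fin d) ℝ)‖) * ‖v‖) := by
    field_simp
    exact (mul_div_cancel_right₀ _ (hQ k).ne').symm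
  rw [h3]
  exact mul_le_mul_of_nonneg_left h2 (norm_nonneg _)

lemma NS_le_of (k : ℕ) (D : ℝ)
    (hjk : ∀ j : ℕ, Real.exp (-(a * |(k:ℝ) - (j:ℝ)|)) *
        ‖((Q j * (Q k)⁻¹ : GL (Fin d) ℝ) : Matrix (Fin d) (Fin d) ℝ)‖ *
        ‖(Q k : Matrix (Fin d) (Fin d) ℝ)‖ ≤ D * ‖(Q j : Matrix (Fin d) (Fin d) ℝ)‖)
    (v : EuclideanSpace ℝ (Fin d)) : NS Q a k v ≤ D * ‖v‖ := by
  rw [NS_apply]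
  set u := Matrix.toEuclideanLin (((Q k)⁻¹ : GL (Fin d) ℝ) : Matrix (Fin d) (Fin d) ℝ) v with hu
  have hsup : ntS Q a k u ≤ (D / ‖(Q k : Matrix (Fin d) (Fin d) ℝ)‖) * ‖v‖ := by
    rw [ntS_apply Q a hQ ha]
    refine ciSup_le fun j => ?_
    rw [pS_apply]
    have h5 : Matrix.toEuclideanLin ((Q j : Matrix (Fin d) (Fin d) ℝ)) u
        = Matrix.toEuclideanLin ((Q j * (Q k)⁻¹ : GL (Fin d) ℝ) : Matrix (Fin d) (Fin d) ℝ) v := by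
      have h6 : ((Q j * (Q k)⁻¹ : GL (Fin d) ℝ) : Matrix (Fin d) (Fin d) ℝ)
          = (Q j : Matrix (Fin d) (Fin d) ℝ) * (((Q k)⁻¹ : GL (Fin d) ℝ) : Matrix (Fin d) (Fin d) ℝ) := rfl
      rw [h6, tEL_mul, hu]
    rw [h5]
    calc (Real.exp (-(a * |(k:ℝ) - (j:ℝ)|)) / ‖(Q j : Matrix (Fin d) (Fin d) ℝ)‖) *
        ‖Matrix.toEuclideanLin ((Q j * (Q k)⁻¹ : GL (Fin d) ℝ) : Matrix (Fin d) (Fin d) ℝ) v‖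
        ≤ (Real.exp (-(a * |(k:ℝ) - (j:ℝ)|)) / ‖(Q j : Matrix (Fin d) (Fin d) ℝ)‖) *
          (‖((Q j * (Q k)⁻¹ : GL (Fin d) ℝ) : Matrix (Fin d) (Fin d) ℝ)‖ * ‖v‖) :=
          mul_le_mul_of_nonneg_left (tEL_norm _ _) (by positivity)
      _ ≤ (D / ‖(Q k : Matrix (Fin d) (Fin d) ℝ)‖) * ‖v‖ := by
          rw [div_mul_eq_mul_div, div_mul_eq_mul_div, div_le_div_iff₀ (hQ j) (hQ k)]
          calc Real.exp (-(a * |(k:ℝ) - (j:ℝ)|)) *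
              (‖((Q j * (Q k)⁻¹ : GL (Fin d) ℝ) : Matrix (Fin d) (Fin d) ℝ)‖ * ‖v‖) *
              ‖(Q k : Matrix (Fin d) (Fin d) ℝ)‖
              = (Real.exp (-(a * |(k:ℝ) - (j:ℝ)|)) *
                ‖((Q j * (Q k)⁻¹ : GL (Fin d) ℝ) : Matrix (Fin d) (Fin d) ℝ)‖ *
                ‖(Q k : Matrix (Fin d) (Fin d) ℝ)‖) * ‖v‖ := by ring
            _ ≤ (D * ‖(Q j : Matrix (Fin d) (Fin d) ℝ)‖) * ‖v‖ :=
                mul_le_mul_of_nonneg_right (hjk j) (norm_nonneg v)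
            _ = D * ‖v‖ * ‖(Q j : Matrix (Fin d) (Fin d) ℝ)‖ := by ring
  calc ‖(Q k : Matrix (Fin d) (Fin d) ℝ)‖ * ntS Q a k u
      ≤ ‖(Q k : Matrix (Fin d) (Fin d) ℝ)‖ * ((D / ‖(Q k : Matrix (Fin d) (Fin d) ℝ)‖) * ‖v‖) :=
        mul_le_mul_of_nonneg_left hsup (norm_nonneg _)
    _ = D * ‖v‖ := by
        field_simp
        rw [mul_assoc]; exact mul_div_cancel_left₀ _ (hQ k).ne'

lemma NS_step (k : ℕ) (T : GL (Fin d) ℝ) (hT : Q (k+1) = T * Q k)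
    (v w : EuclideanSpace ℝ (Fin d)) (hv : v ≠ 0) (hw : w ≠ 0) :
    (NS Q a (k+1) (Matrix.toEuclideanLin ((T : Matrix (Fin d) (Fin d) ℝ)) v) / NS Q a k v) *
      (NS Q a k (Matrix.toEuclideanLin (((T⁻¹ : GL (Fin d) ℝ) : Matrix (Fin d) (Fin d) ℝ)) w) /
        NS Q a (k+1) w) ≤ Real.exp a * Real.exp a := by
  set u := Matrix.toEuclideanLin (((Q k)⁻¹ : GL (Fin d) ℝ) : Matrix (Fin d) (Fin d) ℝ) v with hu
  set u' := Matrix.toEuclideanLin (((Q (k+1))⁻¹ : GL (Fin d) ℝ) : Matrix (Fin d) (Fin d) ℝ) w with hu'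
  have habs1 : |((k:ℝ) + 1) - (k:ℝ)| ≤ 1 := by norm_num
  have habs2 : |(k:ℝ) - ((k:ℝ) + 1)| ≤ 1 := by
    rw [abs_sub_comm]; exact habs1
  -- identity 1
  have i1 : Matrix.toEuclideanLin (((Q (k+1))⁻¹ : GL (Fin d) ℝ) : Matrix (Fin d) (Fin d) ℝ)
      (Matrix.toEuclideanLin ((T : Matrix (Fin d) (Fin d) ℝ)) v) = u := by
    rw [← tEL_mul]
    have h7 : (((Q (k+1))⁻¹ : GL (Fin d) ℝ) : Matrix (Fin d) (Fin d) ℝ) * (T : Matrix (Fin d) (Fin d) ℝ)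
        = ((((Q (k+1))⁻¹ * T) : GL (Fin d) ℝ) : Matrix (Fin d) (Fin d) ℝ) := rfl
    have h8 : ((Q (k+1))⁻¹ * T : GL (Fin d) ℝ) = (Q k)⁻¹ := by
      rw [hT, mul_inv_rev, inv_mul_cancel_right]
    rw [h7, h8, hu]
  have i2 : Matrix.toEuclideanLin (((Q k)⁻¹ : GL (Fin d) ℝ) : Matrix (Fin d) (Fin d) ℝ)
      (Matrix.toEuclideanLin (((T⁻¹ : GL (Fin d) ℝ) : Matrix (Fin d) (Fin d) ℝ)) w) = u' := by
    rw [← tEL_mul]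
    have h7 : (((Q k)⁻¹ : GL (Fin d) ℝ) : Matrix (Fin d) (Fin d) ℝ) *
        ((T⁻¹ : GL (Fin d) ℝ) : Matrix (Fin d) (Fin d) ℝ)
        = ((((Q k)⁻¹ * T⁻¹) : GL (Fin d) ℝ) : Matrix (Fin d) (Fin d) ℝ) := rfl
    have h8 : ((Q k)⁻¹ * T⁻¹ : GL (Fin d) ℝ) = (Q (k+1))⁻¹ := by
      rw [hT, mul_inv_rev]
    rw [h7, h8, hu']
  have hden1 : 0 < NS Q a k v := lt_of_lt_of_le (norm_pos_iff.mpr hv) (NS_lower Q a hQ ha k v)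
  have hden2 : 0 < NS Q a (k+1) w := lt_of_lt_of_le (norm_pos_iff.mpr hw) (NS_lower Q a hQ ha (k+1) w)
  have e1 : NS Q a (k+1) (Matrix.toEuclideanLin ((T : Matrix (Fin d) (Fin d) ℝ)) v)
      = ‖(Q (k+1) : Matrix (Fin d) (Fin d) ℝ)‖ * ntS Q a (k+1) u := by
    rw [NS_apply, i1]
  have e2 : NS Q a k v = ‖(Q k : Matrix (Fin d) (Fin d) ℝ)‖ * ntS Q a k u := by
    rw [NS_apply, hu]
  have e3 : NS Q a k (Matrix.toEuclideanLin (((T⁻¹ : GL (Fin d) ℝ) : Matrix (Fin d) (Fin d) ℝ)) w)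
      = ‖(Q k : Matrix (Fin d) (Fin d) ℝ)‖ * ntS Q a k u' := by
    rw [NS_apply, i2]
  have e4 : NS Q a (k+1) w = ‖(Q (k+1) : Matrix (Fin d) (Fin d) ℝ)‖ * ntS Q a (k+1) u' := by
    rw [NS_apply, hu']
  have d1 : NS Q a (k+1) (Matrix.toEuclideanLin ((T : Matrix (Fin d) (Fin d) ℝ)) v) / NS Q a k v
      ≤ Real.exp a * (‖(Q (k+1) : Matrix (Fin d) (Fin d) ℝ)‖ / ‖(Q k : Matrix (Fin d) (Fin d) ℝ)‖) := by
    rw [div_le_iff₀ hden1, e1, e2]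
    have hsh : ntS Q a (k+1) u ≤ Real.exp a * ntS Q a k u := by
      have := ntS_shift Q a hQ ha (k+1) k (by push_cast; exact habs1) u
      exact this
    calc ‖(Q (k+1) : Matrix (Fin d) (Fin d) ℝ)‖ * ntS Q a (k+1) u
        ≤ ‖(Q (k+1) : Matrix (Fin d) (Fin d) ℝ)‖ * (Real.exp a * ntS Q a k u) :=
          mul_le_mul_of_nonneg_left hsh (norm_nonneg _)
      _ = Real.exp a * (‖(Q (k+1) : Matrix (Fin d) (Fin d) ℝ)‖ / ‖(Q k : Matrix (Fin d) (Fin d) ℝ)‖) *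
          (‖(Q k : Matrix (Fin d) (Fin d) ℝ)‖ * ntS Q a k u) := by
          exact (ratio_helper (hQ k).ne').symm
  have d2 : NS Q a k (Matrix.toEuclideanLin (((T⁻¹ : GL (Fin d) ℝ) : Matrix (Fin d) (Fin d) ℝ)) w) /
      NS Q a (k+1) w
      ≤ Real.exp a * (‖(Q k : Matrix (Fin d) (Fin d) ℝ)‖ / ‖(Q (k+1) : Matrix (Fin d) (Fin d) ℝ)‖) := by
    rw [div_le_iff₀ hden2, e3, e4]
    have hsh : ntS Q a k u' ≤ Real.exp a * ntS Q a (k+1) u' := by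
      have := ntS_shift Q a hQ ha k (k+1) (by push_cast; exact habs2) u'
      exact this
    calc ‖(Q k : Matrix (Fin d) (Fin d) ℝ)‖ * ntS Q a k u'
        ≤ ‖(Q k : Matrix (Fin d) (Fin d) ℝ)‖ * (Real.exp a * ntS Q a (k+1) u') :=
          mul_le_mul_of_nonneg_left hsh (norm_nonneg _)
      _ = Real.exp a * (‖(Q k : Matrix (Fin d) (Fin d) ℝ)‖ / ‖(Q (k+1) : Matrix (Fin d) (Fin d) ℝ)‖) *
          (‖(Q (k+1) : Matrix (Fin d) (Fin d) ℝ)‖ * ntS Q a (k+1) u') := by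
          exact (ratio_helper (hQ (k+1)).ne').symm
  have hnn1 : 0 ≤ NS Q a (k+1) (Matrix.toEuclideanLin ((T : Matrix (Fin d) (Fin d) ℝ)) v) / NS Q a k v :=
    div_nonneg (apply_nonneg _ _) hden1.le
  have hrhs : 0 ≤ Real.exp a * (‖(Q (k+1) : Matrix (Fin d) (Fin d) ℝ)‖ / ‖(Q k : Matrix (Fin d) (Fin d) ℝ)‖) := by
    positivity
  calc (NS Q a (k+1) (Matrix.toEuclideanLin ((T : Matrix (Fin d) (Fin d) ℝ)) v) / NS Q a k v) *
      (NS Q a k (Matrix.toEuclideanLin (((T⁻¹ : GL (Fin d) ℝ) : Matrix (Fin d) (Fin d) ℝ)) w) /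
        NS Q a (k+1) w)
      ≤ (Real.exp a * (‖(Q (k+1) : Matrix (Fin d) (Fin d) ℝ)‖ / ‖(Q k : Matrix (Fin d) (Fin d) ℝ)‖)) *
        (Real.exp a * (‖(Q k : Matrix (Fin d) (Fin d) ℝ)‖ / ‖(Q (k+1) : Matrix (Fin d) (Fin d) ℝ)‖)) :=
        mul_le_mul d1 d2 (div_nonneg (apply_nonneg _ _) hden2.le) hrhs
    _ = Real.exp a * Real.exp a := by
        have h1 := (hQ k).ne'
        have h2 := (hQ (k+1)).ne'
        field_simp

end AdaptedAux2

end

noncomputable section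

theorem aux_main {M : Type*} {d : ℕ} (hd : 0 < d) (g : Equiv.Perm M)
    (α : MulAut (GL (Fin d) ℝ)) (A : M → GL (Fin d) ℝ)
    (ρ θ δ K : ℝ) (hρ : 0 < ρ) (hθ : 0 < θ) (hδ : 0 < δ) (hK : 0 < K)
    (h1 : ∀ (n : ℤ) (y : M),
      ‖(((α ^ (-n)) (twc g α A n y) : GL (Fin d) ℝ) : Matrix (Fin d) (Fin d) ℝ)‖ *
        ‖(((α ^ (-n)) ((twc g α A n y)⁻¹) : GL (Fin d) ℝ) : Matrix (Fin d) (Fin d) ℝ)‖ <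
        K * Real.exp (θ * |(n : ℝ)|))
    (h3 : ∀ (n : ℤ) (T : GL (Fin d) ℝ),
      ‖(((α ^ n) T : GL (Fin d) ℝ) : Matrix (Fin d) (Fin d) ℝ)‖ ≤
        K * Real.exp (ρ * |(n : ℝ)|) * ‖(T : Matrix (Fin d) (Fin d) ℝ)‖)
    (x : M) :
    ∃ (N : ℕ → Seminorm ℝ (EuclideanSpace ℝ (Fin d))) (C' : ℝ), 0 < C' ∧
      (∀ (k : ℕ) (v : EuclideanSpace ℝ (Fin d)),
        ‖v‖ ≤ N k v ∧ N k v ≤ C' * Real.exp (2 * ρ * k) * ‖v‖) ∧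
      (∀ (k : ℕ) (v w : EuclideanSpace ℝ (Fin d)), v ≠ 0 → w ≠ 0 →
        (N (k + 1) (Matrix.toEuclideanLin
              ((((α ^ (-(k + 1 : ℤ))) (A ((g ^ (k : ℤ)) x))) :
                Matrix (Fin d) (Fin d) ℝ)) v) / N k v) *
          (N k (Matrix.toEuclideanLin
              (((((α ^ (-(k + 1 : ℤ))) (A ((g ^ (k : ℤ)) x)))⁻¹ :
                GL (Fin d) ℝ) : Matrix (Fin d) (Fin d) ℝ)) w) / N (k + 1) w) ≤
          Real.exp (2 * θ + δ)) := by
  have ha0 : (0:ℝ) ≤ θ + δ/2 := by linarith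
  set a : ℝ := θ + δ/2 with hadef
  set Q : ℕ → GL (Fin d) ℝ := fun k => AdaptedAux.P g α A x k with hQdef
  have hQ : ∀ j : ℕ, 0 < ‖(Q j : Matrix (Fin d) (Fin d) ℝ)‖ :=
    fun j => AdaptedAux.nmG_pos hd _
  have hprod : ∀ j m : ℕ,
      ‖((Q (m+j) * (Q j)⁻¹ : GL (Fin d) ℝ) : Matrix (Fin d) (Fin d) ℝ)‖ *
        ‖((Q j * (Q (m+j))⁻¹ : GL (Fin d) ℝ) : Matrix (Fin d) (Fin d) ℝ)‖
        ≤ K^3 * Real.exp (2*ρ*j + θ*m) :=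
    fun j m => AdaptedAux.prod_bound g α A K ρ θ hK h1 h3 x j m
  refine ⟨fun k => AdaptedAux2.NS Q a k, K^3, by positivity, ?_, ?_⟩
  · intro k v
    refine ⟨AdaptedAux2.NS_lower Q a hQ ha0 k v, ?_⟩
    refine AdaptedAux2.NS_le_of Q a hQ ha0 k (K^3 * Real.exp (2*ρ*k)) (fun j => ?_) v
    -- key bound for index j
    have hQk_le : ‖(Q k : Matrix (Fin d) (Fin d) ℝ)‖ ≤
        ‖((Q k * (Q j)⁻¹ : GL (Fin d) ℝ) : Matrix (Fin d) (Fin d) ℝ)‖ *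
          ‖(Q j : Matrix (Fin d) (Fin d) ℝ)‖ := by
      have hid : Q k = (Q k * (Q j)⁻¹) * Q j := by rw [inv_mul_cancel_right]
      calc ‖(Q k : Matrix (Fin d) (Fin d) ℝ)‖
          = ‖(((Q k * (Q j)⁻¹) * Q j : GL (Fin d) ℝ) : Matrix (Fin d) (Fin d) ℝ)‖ := by
            rw [← hid]
        _ ≤ _ := Matrix.l2_opNorm_mul _ _
    have hpair : ‖((Q k * (Q j)⁻¹ : GL (Fin d) ℝ) : Matrix (Fin d) (Fin d) ℝ)‖ *
        ‖((Q j * (Q k)⁻¹ : GL (Fin d) ℝ) : Matrix (Fin d) (Fin d) ℝ)‖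
        ≤ K^3 * Real.exp (2*ρ*k + θ*|(k:ℝ)-(j:ℝ)|) := by
      rcases le_total j k with hjl | hjl
      · obtain ⟨m, rfl⟩ : ∃ m, k = m + j := ⟨k - j, (Nat.sub_add_cancel hjl).symm⟩
        refine (hprod j m).trans ?_
        have habs : |((m+j:ℕ):ℝ) - (j:ℝ)| = (m:ℝ) := by
          push_cast
          rw [add_sub_cancel_right, abs_of_nonneg (by positivity)]
        rw [habs]
        have hexp : 2*ρ*(j:ℝ) + θ*(m:ℝ) ≤ 2*ρ*((m+j:ℕ):ℝ) + θ*(m:ℝ) := by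
          push_cast
          nlinarith [hρ.le, Nat.cast_nonneg (α := ℝ) m]
        exact mul_le_mul_of_nonneg_left (Real.exp_le_exp.mpr hexp) (by positivity)
      · obtain ⟨m, rfl⟩ : ∃ m, j = m + k := ⟨j - k, (Nat.sub_add_cancel hjl).symm⟩
        have habs : |(k:ℝ) - ((m+k:ℕ):ℝ)| = (m:ℝ) := by
          push_cast
          rw [show (k:ℝ) - ((m:ℝ)+(k:ℝ)) = -(m:ℝ) by ring, abs_neg,
            abs_of_nonneg (by positivity)]
        rw [habs]
        calc ‖((Q k * (Q (m+k))⁻¹ : GL (Fin d) ℝ) : Matrix (Fin d) (Fin d) ℝ)‖ *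
            ‖((Q (m+k) * (Q k)⁻¹ : GL (Fin d) ℝ) : Matrix (Fin d) (Fin d) ℝ)‖
            = ‖((Q (m+k) * (Q k)⁻¹ : GL (Fin d) ℝ) : Matrix (Fin d) (Fin d) ℝ)‖ *
              ‖((Q k * (Q (m+k))⁻¹ : GL (Fin d) ℝ) : Matrix (Fin d) (Fin d) ℝ)‖ := mul_comm _ _
          _ ≤ K^3 * Real.exp (2*ρ*k + θ*m) := hprod k m
    have hstep3 : Real.exp (-(a * |(k:ℝ)-(j:ℝ)|)) *
        (K^3 * Real.exp (2*ρ*k + θ*|(k:ℝ)-(j:ℝ)|)) ≤ K^3 * Real.exp (2*ρ*k) := by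
      rw [mul_comm (Real.exp _) _, mul_assoc, ← Real.exp_add]
      have h9 : 2*ρ*(k:ℝ) + θ*|(k:ℝ)-(j:ℝ)| + -(a * |(k:ℝ)-(j:ℝ)|) ≤ 2*ρ*(k:ℝ) := by
        have h10 : 0 ≤ |(k:ℝ)-(j:ℝ)| := abs_nonneg _
        rw [hadef]
        nlinarith [mul_nonneg hδ.le h10]
      exact mul_le_mul_of_nonneg_left (Real.exp_le_exp.mpr h9) (by positivity)
    calc Real.exp (-(a * |(k:ℝ)-(j:ℝ)|)) *
        ‖((Q j * (Q k)⁻¹ : GL (Fin d) ℝ) : Matrix (Fin d) (Fin d) ℝ)‖ *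
        ‖(Q k : Matrix (Fin d) (Fin d) ℝ)‖
        ≤ Real.exp (-(a * |(k:ℝ)-(j:ℝ)|)) *
          ‖((Q j * (Q k)⁻¹ : GL (Fin d) ℝ) : Matrix (Fin d) (Fin d) ℝ)‖ *
          (‖((Q k * (Q j)⁻¹ : GL (Fin d) ℝ) : Matrix (Fin d) (Fin d) ℝ)‖ *
            ‖(Q j : Matrix (Fin d) (Fin d) ℝ)‖) := by
          refine mul_le_mul_of_nonneg_left hQk_le ?_
          exact mul_nonneg (Real.exp_pos _).le (norm_nonneg _)
      _ = (Real.exp (-(a * |(k:ℝ)-(j:ℝ)|)) *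
          (‖((Q k * (Q j)⁻¹ : GL (Fin d) ℝ) : Matrix (Fin d) (Fin d) ℝ)‖ *
            ‖((Q j * (Q k)⁻¹ : GL (Fin d) ℝ) : Matrix (Fin d) (Fin d) ℝ)‖)) *
          ‖(Q j : Matrix (Fin d) (Fin d) ℝ)‖ := by ring
      _ ≤ (Real.exp (-(a * |(k:ℝ)-(j:ℝ)|)) *
          (K^3 * Real.exp (2*ρ*k + θ*|(k:ℝ)-(j:ℝ)|))) *
          ‖(Q j : Matrix (Fin d) (Fin d) ℝ)‖ := by
          refine mul_le_mul_of_nonneg_right ?_ (norm_nonneg _)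
          exact mul_le_mul_of_nonneg_left hpair (Real.exp_pos _).le
      _ ≤ (K^3 * Real.exp (2*ρ*k)) * ‖(Q j : Matrix (Fin d) (Fin d) ℝ)‖ :=
          mul_le_mul_of_nonneg_right hstep3 (norm_nonneg _)
      _ = K^3 * Real.exp (2*ρ*k) * ‖(Q j : Matrix (Fin d) (Fin d) ℝ)‖ := by ring
  · intro k v w hv hw
    have hzp : ((g ^ ((k:ℕ):ℤ)) x) = (g ^ k) x := by
      rw [zpow_natCast]
    rw [hzp]
    set T : GL (Fin d) ℝ := (α ^ (-(k+1:ℤ))) (A ((g ^ k) x)) with hTdef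
    have hT : Q (k+1) = T * Q k := AdaptedAux.P_succ g α A x k
    have hstep := AdaptedAux2.NS_step Q a hQ ha0 k T hT v w hv hw
    have hsum : a + a = 2*θ+δ := by rw [hadef]; ring
    have hexp : Real.exp a * Real.exp a = Real.exp (2*θ+δ) := by
      rw [← Real.exp_add, hsum]
    rw [← hexp]
    exact hstep

end

/-- **Corollary (adapted operator norms).** There is a family of norms `‖·‖_k` on `ℝ^d`,
comparable with the Euclidean norm as `‖v‖ ≤ ‖v‖_k ≤ C e^{2ρk}‖v‖`, such that for every
`k ≥ 1` the matrix `T_k = α^{-k}(A(f^{k-1}(x)))` satisfies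
`‖T_k‖_k · ‖T_k⁻¹‖_k ≤ e^{2θ+δ}`, where the operator norms are taken from `‖·‖_{k-1}` to
`‖·‖_k` and back (stated pointwise on nonzero vectors). -/
theorem adapted_operator_norms {M : Type*} [MetricSpace M] [CompactSpace M] {d : ℕ}
    (f : M ≃ₜ M) (C ε lam τ ν : ℝ) (hν : 0 < ν)
    (hf : IsHyperbolicLPS f C ε lam τ)
    (A : M → GL (Fin d) ℝ) (α : MulAut (GL (Fin d) ℝ))
    (hA : IsHolder ν A) (ρ θ δ : ℝ) (hρ : 0 < ρ) (hθ : 0 < θ) (hδ : 0 < δ)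
    (hFB : FiberBunchedWith f.toEquiv α A ρ θ)
    (hlt : 5 * ρ + 2 * θ + δ < lam * ν) (x : M) :
    ∃ (N : ℕ → Seminorm ℝ (EuclideanSpace ℝ (Fin d))) (C' : ℝ), 0 < C' ∧
      (∀ (k : ℕ) (v : EuclideanSpace ℝ (Fin d)),
        ‖v‖ ≤ N k v ∧ N k v ≤ C' * Real.exp (2 * ρ * k) * ‖v‖) ∧
      (∀ (k : ℕ) (v w : EuclideanSpace ℝ (Fin d)), v ≠ 0 → w ≠ 0 →
        (N (k + 1) (Matrix.toEuclideanLin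
              ((((α ^ (-(k + 1 : ℤ))) (A ((f.toEquiv ^ (k : ℤ)) x))) :
                Matrix (Fin d) (Fin d) ℝ)) v) / N k v) *
          (N k (Matrix.toEuclideanLin
              (((((α ^ (-(k + 1 : ℤ))) (A ((f.toEquiv ^ (k : ℤ)) x)))⁻¹ :
                GL (Fin d) ℝ) : Matrix (Fin d) (Fin d) ℝ)) w) / N (k + 1) w) ≤
          Real.exp (2 * θ + δ)) := by
  rcases Nat.eq_zero_or_pos d with hd | hd
  · subst hd
    refine ⟨fun _ => 0, 1, one_pos, ?_, ?_⟩
    · intro k v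
      have hv : ‖v‖ = 0 := by simp [EuclideanSpace.norm_eq]
      constructor
      · simp [hv]
      · simp [hv]
    · intro k v w hv hw
      exact absurd (norm_eq_zero.mp (by simp [EuclideanSpace.norm_eq])) hv
  · obtain ⟨K, hK, h1, h2, h3⟩ := hFB
    exact aux_main hd f.toEquiv α A ρ θ δ K hρ hθ hδ hK h1 h3 x
end

section
/- Let f : M → M be a hyperbolic homeomorphism with local product structure on a compact metric space (M,d) with contraction exponent λ, let A : M → GL(d,ℝ) be ν-Hölder continuous, α an automorphism of GL(d,ℝ), suppose the α-twisted cocycle A_α is fiber-bunched with constants ρ, θ, and let δ > 0 and γ ∈ (0, λ) satisfy 4ρ + δ < νγ. Then for every C₁ > 0 there exists a constant C' > 0, depending only on A, α, f, δ, γ and C₁, such that: whenever x, y ∈ M and n ∈ ℕ satisfy d(f^k(x), f^k(y)) ≤ C₁ e^{-γk} d(x,y) for every 0 ≤ k ≤ n, one has ‖α^{-k}(A_α^k(y))‖ · ‖α^{-k}(A_α^k(x)^{-1})‖ ≤ C' e^{(4ρ + 2θ + δ)k} for every 0 ≤ k ≤ n. -/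
open scoped Matrix.Norms.L2Operator

section AuxiliaryLemmas

open scoped Matrix.Norms.L2Operator
open MeasureTheory

/-- Determinant is bounded by the `d`-th power of the L2 operator norm. -/
lemma abs_det_le_norm_pow {d : ℕ} (M : Matrix (Fin d) (Fin d) ℝ) : |M.det| ≤ ‖M‖ ^ d := by
  classical
  set E := EuclideanSpace ℝ (Fin d)
  set f : E →ₗ[ℝ] E := Matrix.toEuclideanLin M with hf
  have hdet : LinearMap.det f = M.det := by
    rw [hf, Matrix.toEuclideanLin_eq_toLin, LinearMap.det_toLin]
  have hnorm : ∀ x : E, ‖f x‖ ≤ ‖M‖ * ‖x‖ := fun x => by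
    exact Matrix.l2_opNorm_mulVec M x
  have hsub : f '' (Metric.closedBall 0 1) ⊆ Metric.closedBall (0:E) ‖M‖ := by
    rintro _ ⟨x, hx, rfl⟩
    have hx1 : ‖x‖ ≤ 1 := by simpa [Metric.mem_closedBall] using hx
    simp only [Metric.mem_closedBall, dist_zero_right]
    calc ‖f x‖ ≤ ‖M‖ * ‖x‖ := hnorm x
    _ ≤ ‖M‖ * 1 := mul_le_mul_of_nonneg_left hx1 (norm_nonneg M)
    _ = ‖M‖ := mul_one _
  have h1 : (volume : Measure E) (f '' Metric.closedBall 0 1)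
      = ENNReal.ofReal |M.det| * volume (Metric.ball (0:E) 1) := by
    rw [Measure.addHaar_image_linearMap, hdet,
      Measure.addHaar_closedBall _ _ (zero_le_one), one_pow, ENNReal.ofReal_one, one_mul]
  have h2 : (volume : Measure E) (Metric.closedBall (0:E) ‖M‖)
      = ENNReal.ofReal (‖M‖ ^ d) * volume (Metric.ball (0:E) 1) := by
    rw [Measure.addHaar_closedBall _ _ (norm_nonneg M), finrank_euclideanSpace_fin]
  have hle := measure_mono (μ := (volume : Measure E)) hsub
  rw [h1, h2] at hle
  have hball0 : volume (Metric.ball (0:E) 1) ≠ 0 :=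
    (Metric.measure_ball_pos _ _ one_pos).ne'
  have hballt : volume (Metric.ball (0:E) 1) ≠ ⊤ :=
    measure_ball_lt_top.ne
  have := (ENNReal.mul_le_mul_iff_left hball0 hballt).1 hle
  rwa [ENNReal.ofReal_le_ofReal_iff (by positivity)] at this

lemma mulaut_zpow_apply {G : Type*} [Group G] (α : MulAut G) (a b : ℤ) (g : G) :
    (α ^ a) ((α ^ b) g) = (α ^ (a + b)) g := by
  rw [zpow_add]; rfl

lemma perm_zpow_apply {M : Type*} (f : Equiv.Perm M) (a b : ℤ) (z : M) :
    (f ^ a) ((f ^ b) z) = (f ^ (a + b)) z := by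
  rw [zpow_add]; rfl

lemma twc_natCast {M G : Type*} [Group G] (f : Equiv.Perm M) (α : MulAut G) (A : M → G)
    (k : ℕ) (z : M) : twc f α A (k : ℤ) z = twcN f α A k z := rfl

lemma twc_negSucc {M G : Type*} [Group G] (f : Equiv.Perm M) (α : MulAut G) (A : M → G)
    (m : ℕ) (z : M) :
    twc f α A (Int.negSucc m) z
      = (α ^ (Int.negSucc m)) ((twcN f α A (m + 1) ((f ^ (Int.negSucc m)) z))⁻¹) := rfl

lemma twcN_succ {M G : Type*} [Group G] (f : Equiv.Perm M) (α : MulAut G) (A : M → G)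
    (m : ℕ) (z : M) :
    twcN f α A (m+1) z = A ((f ^ m) z) * α (twcN f α A m z) := rfl

lemma P_succ {M G : Type*} [Group G] (f : Equiv.Perm M) (α : MulAut G) (A : M → G)
    (m : ℕ) (z : M) :
    (α ^ (-((m:ℤ)+1))) (twcN f α A (m+1) z)
      = (α ^ (-((m:ℤ)+1))) (A ((f ^ m) z)) * (α ^ (-(m:ℤ))) (twcN f α A m z) := by
  rw [twcN_succ, map_mul]
  congr 1
  have h : α (twcN f α A m z) = (α ^ (1:ℤ)) (twcN f α A m z) := by rw [zpow_one]
  rw [h, mulaut_zpow_apply]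
  norm_num

/-- Main algebraic estimate: for units `u v`, if the fiber-bunching products are bounded
by `B` and the determinant ratio by `P ^ d`, then `‖u‖ * ‖v⁻¹‖ ≤ B ^ 2 * P`. -/
lemma unit_norm_estimate {d : ℕ} (hd : 0 < d) (u v : GL (Fin d) ℝ) {B P : ℝ}
    (hB : 0 ≤ B) (hP : 0 ≤ P)
    (hu : ‖(u : Matrix (Fin d) (Fin d) ℝ)‖ * ‖((u⁻¹ : GL (Fin d) ℝ) : Matrix (Fin d) (Fin d) ℝ)‖ ≤ B)
    (hv : ‖(v : Matrix (Fin d) (Fin d) ℝ)‖ * ‖((v⁻¹ : GL (Fin d) ℝ) : Matrix (Fin d) (Fin d) ℝ)‖ ≤ B)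
    (hdet : |(u : Matrix (Fin d) (Fin d) ℝ).det| ≤ P ^ d * |(v : Matrix (Fin d) (Fin d) ℝ).det|) :
    ‖(u : Matrix (Fin d) (Fin d) ℝ)‖ * ‖((v⁻¹ : GL (Fin d) ℝ) : Matrix (Fin d) (Fin d) ℝ)‖
      ≤ B ^ 2 * P := by
  have hdets : ∀ w : GL (Fin d) ℝ, 0 < |(w : Matrix (Fin d) (Fin d) ℝ).det| := fun w => by
    refine abs_pos.2 fun h0 => ?_
    have hWu : IsUnit ((w : Matrix (Fin d) (Fin d) ℝ)).det :=
      (Matrix.isUnit_iff_isUnit_det _).1 w.isUnit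
    rw [h0] at hWu
    exact hWu.ne_zero rfl
  have hinvdet : ∀ w : GL (Fin d) ℝ,
      |((w⁻¹ : GL (Fin d) ℝ) : Matrix (Fin d) (Fin d) ℝ).det|
        = |(w : Matrix (Fin d) (Fin d) ℝ).det|⁻¹ := fun w => by
    have hmul : (w : Matrix (Fin d) (Fin d) ℝ) * ((w⁻¹ : GL (Fin d) ℝ) : Matrix (Fin d) (Fin d) ℝ)
        = 1 := by rw [← Units.val_mul, mul_inv_cancel, Units.val_one]
    have hd1 := congrArg Matrix.det hmul
    rw [Matrix.det_mul, Matrix.det_one] at hd1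
    have := congrArg abs hd1
    rw [abs_mul, abs_one] at this
    field_simp [(hdets w).ne'] at this ⊢
    linarith [this]
  set a := ‖(u : Matrix (Fin d) (Fin d) ℝ)‖
  set b := ‖((v⁻¹ : GL (Fin d) ℝ) : Matrix (Fin d) (Fin d) ℝ)‖
  have ha0 : 0 ≤ a := norm_nonneg _
  have hb0 : 0 ≤ b := norm_nonneg _
  -- Step A : a ^ d ≤ B ^ d * |det u|
  have stepA : a ^ d ≤ B ^ d * |(u : Matrix (Fin d) (Fin d) ℝ).det| := by
    have h3 : |(u : Matrix (Fin d) (Fin d) ℝ).det|⁻¹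
        ≤ ‖((u⁻¹ : GL (Fin d) ℝ) : Matrix (Fin d) (Fin d) ℝ)‖ ^ d := by
      rw [← hinvdet u]; exact abs_det_le_norm_pow _
    have h4 : a ^ d * |(u : Matrix (Fin d) (Fin d) ℝ).det|⁻¹ ≤ B ^ d := by
      calc a ^ d * |(u : Matrix (Fin d) (Fin d) ℝ).det|⁻¹
          ≤ a ^ d * ‖((u⁻¹ : GL (Fin d) ℝ) : Matrix (Fin d) (Fin d) ℝ)‖ ^ d :=
            mul_le_mul_of_nonneg_left h3 (pow_nonneg ha0 d)
        _ = (a * ‖((u⁻¹ : GL (Fin d) ℝ) : Matrix (Fin d) (Fin d) ℝ)‖) ^ d := (mul_pow _ _ _).symm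
        _ ≤ B ^ d := pow_le_pow_left₀ (mul_nonneg ha0 (norm_nonneg _)) hu d
    have h5 := mul_le_mul_of_nonneg_right h4 (hdets u).le
    rwa [mul_assoc, inv_mul_cancel₀ (hdets u).ne', mul_one] at h5
  -- Step B : b ^ d ≤ B ^ d * |det v|⁻¹
  have stepB : b ^ d ≤ B ^ d * |(v : Matrix (Fin d) (Fin d) ℝ).det|⁻¹ := by
    have h3 : |(v : Matrix (Fin d) (Fin d) ℝ).det| ≤ ‖(v : Matrix (Fin d) (Fin d) ℝ)‖ ^ d :=
      abs_det_le_norm_pow _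
    have h4 : b ^ d * |(v : Matrix (Fin d) (Fin d) ℝ).det| ≤ B ^ d := by
      calc b ^ d * |(v : Matrix (Fin d) (Fin d) ℝ).det|
          ≤ b ^ d * ‖(v : Matrix (Fin d) (Fin d) ℝ)‖ ^ d :=
            mul_le_mul_of_nonneg_left h3 (pow_nonneg hb0 d)
        _ = (‖(v : Matrix (Fin d) (Fin d) ℝ)‖ * b) ^ d := by rw [mul_pow]; ring
        _ ≤ B ^ d := pow_le_pow_left₀ (mul_nonneg (norm_nonneg _) hb0) hv d
    have h5 := mul_le_mul_of_nonneg_right h4 (inv_nonneg.2 (hdets v).le)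
    rwa [mul_assoc, mul_inv_cancel₀ (hdets v).ne', mul_one] at h5
  -- combine
  have hratio : |(u : Matrix (Fin d) (Fin d) ℝ).det| * |(v : Matrix (Fin d) (Fin d) ℝ).det|⁻¹
      ≤ P ^ d := by
    have := mul_le_mul_of_nonneg_right hdet (inv_nonneg.2 (hdets v).le)
    rwa [mul_assoc, mul_inv_cancel₀ (hdets v).ne', mul_one] at this
  have hfinal : (a * b) ^ d ≤ (B ^ 2 * P) ^ d := by
    calc (a * b) ^ d = a ^ d * b ^ d := mul_pow _ _ _
      _ ≤ (B ^ d * |(u : Matrix (Fin d) (Fin d) ℝ).det|)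
          * (B ^ d * |(v : Matrix (Fin d) (Fin d) ℝ).det|⁻¹) := by
          apply mul_le_mul stepA stepB (pow_nonneg hb0 d)
          positivity
      _ = (B ^ d * B ^ d) * (|(u : Matrix (Fin d) (Fin d) ℝ).det|
            * |(v : Matrix (Fin d) (Fin d) ℝ).det|⁻¹) := by ring
      _ ≤ (B ^ d * B ^ d) * P ^ d := by
          apply mul_le_mul_of_nonneg_left hratio
          positivity
      _ = (B ^ 2 * P) ^ d := by rw [mul_pow, ← pow_mul']; ring_nf
  exact le_of_pow_le_pow_left₀ hd.ne' (by positivity) hfinal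

end AuxiliaryLemmas

/-- **Remark (growth estimate along exponentially shadowing orbits).** If `γ ∈ (0, λ)` and
`4ρ + δ < νγ`, then for every `C₁ > 0` there is `C' > 0` such that whenever
`d(f^k(x), f^k(y)) ≤ C₁ e^{-γk} d(x,y)` for all `0 ≤ k ≤ n`, one has
`‖α^{-k}(A_α^k(y))‖·‖α^{-k}(A_α^k(x)⁻¹)‖ ≤ C' e^{(4ρ+2θ+δ)k}` for all `0 ≤ k ≤ n`. -/
theorem growth_estimate_shadowing {M : Type*} [MetricSpace M] [CompactSpace M] {d : ℕ}
    (f : M ≃ₜ M) (C ε lam τ ν : ℝ) (hν : 0 < ν)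
    (hf : IsHyperbolicLPS f C ε lam τ)
    (A : M → GL (Fin d) ℝ) (α : MulAut (GL (Fin d) ℝ))
    (hA : IsHolder ν A) (ρ θ δ γ : ℝ) (hρ : 0 < ρ) (hθ : 0 < θ) (hδ : 0 < δ)
    (hFB : FiberBunchedWith f.toEquiv α A ρ θ)
    (hγ : 0 < γ ∧ γ < lam) (hlt : 4 * ρ + δ < ν * γ) :
    ∀ C₁ > 0, ∃ C' > 0, ∀ (x y : M) (n : ℕ),
      (∀ k : ℕ, k ≤ n →
        dist ((f.toEquiv ^ k) x) ((f.toEquiv ^ k) y) ≤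
          C₁ * Real.exp (-γ * k) * dist x y) →
      ∀ k : ℕ, k ≤ n →
        ‖(((α ^ (-(k : ℤ))) (twc f.toEquiv α A k y) : GL (Fin d) ℝ) :
            Matrix (Fin d) (Fin d) ℝ)‖ *
          ‖(((α ^ (-(k : ℤ))) ((twc f.toEquiv α A k x)⁻¹) : GL (Fin d) ℝ) :
            Matrix (Fin d) (Fin d) ℝ)‖ ≤
          C' * Real.exp ((4 * ρ + 2 * θ + δ) * k) := by
  
  classical
  obtain ⟨CB, hCB, h1, h2, h3⟩ := hFB
  obtain ⟨CA, hCA, hAH⟩ := hA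
  intro C₁ hC₁
  rcases isEmpty_or_nonempty M with hM | hM
  · exact ⟨1, one_pos, fun x _ _ _ _ _ => (IsEmpty.false x).elim⟩
  rcases Nat.eq_zero_or_pos d with hd0 | hd
  · refine ⟨1, one_pos, fun x y n _ k _ => ?_⟩
    haveI : IsEmpty (Fin d) := by rw [hd0]; infer_instance
    have hz : ∀ g : GL (Fin d) ℝ, ‖(g : Matrix (Fin d) (Fin d) ℝ)‖ = 0 := fun g => by
      have : (g : Matrix (Fin d) (Fin d) ℝ) = 0 := by
        funext i; exact (IsEmpty.false i).elim
      rw [this, norm_zero]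
    rw [hz, hz, zero_mul]
    positivity
  haveI : Nonempty (Fin d) := Fin.pos_iff_nonempty.1 hd
  obtain ⟨x₀⟩ := hM
  have hone : ‖(1 : Matrix (Fin d) (Fin d) ℝ)‖ = 1 := CStarRing.norm_one
  -- `CB` is at least 1
  have hCB1 : (1:ℝ) ≤ CB := by
    have h := h1 0 x₀
    rw [show twc f.toEquiv α A (0:ℤ) x₀ = 1 from rfl] at h
    simp only [inv_one, map_one, Units.val_one, hone, one_mul, Int.cast_zero, abs_zero,
      mul_zero, Real.exp_zero, mul_one] at h
    exact h.le
  -- continuity of `A` and of the inverse, and the uniform bound `K'`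
  have contA : Continuous fun z : M => ((A z : GL (Fin d) ℝ) : Matrix (Fin d) (Fin d) ℝ) := by
    rw [Metric.continuous_iff]
    intro b e he
    refine ⟨(e / (CA + 1)) ^ (ν⁻¹), Real.rpow_pos_of_pos (by positivity) _, fun a hab => ?_⟩
    have hb1 : dist ((A a : GL (Fin d) ℝ) : Matrix (Fin d) (Fin d) ℝ)
        ((A b : GL (Fin d) ℝ) : Matrix (Fin d) (Fin d) ℝ) ≤ CA * dist a b ^ ν := by
      rw [dist_eq_norm]; exact hAH a b
    have hb2 : dist a b ^ ν < ((e / (CA + 1)) ^ (ν⁻¹ : ℝ)) ^ ν :=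
      Real.rpow_lt_rpow dist_nonneg hab hν
    rw [← Real.rpow_mul (by positivity), inv_mul_cancel₀ hν.ne', Real.rpow_one] at hb2
    have : CA * dist a b ^ ν < CA * (e / (CA + 1)) :=
      mul_lt_mul_of_pos_left hb2 hCA
    have hlast : CA * (e / (CA + 1)) < e := by
      rw [div_eq_inv_mul]
      rw [show CA * ((CA+1)⁻¹ * e) = (CA / (CA+1)) * e by ring]
      nth_rewrite 2 [show e = 1 * e by ring]
      apply mul_lt_mul_of_pos_right _ he
      rw [div_lt_one (by positivity)]
      linarith
    linarith [hb1]
  have contInv : Continuous fun z : M =>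
      (((A z)⁻¹ : GL (Fin d) ℝ) : Matrix (Fin d) (Fin d) ℝ) := by
    have heq : (fun z : M => (((A z)⁻¹ : GL (Fin d) ℝ) : Matrix (Fin d) (Fin d) ℝ))
        = fun z : M => Ring.inverse ((A z : GL (Fin d) ℝ) : Matrix (Fin d) (Fin d) ℝ) :=
      funext fun z => (Ring.inverse_unit (A z)).symm
    rw [heq, continuous_iff_continuousAt]
    intro z
    exact ContinuousAt.comp (x := z) (g := Ring.inverse)
      (NormedRing.inverse_continuousAt (A z)) contA.continuousAt
  obtain ⟨z₀, -, hz₀⟩ := isCompact_univ.exists_isMaxOn ⟨x₀, Set.mem_univ x₀⟩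
    (contInv.norm.continuousOn)
  set K' := ‖(((A z₀)⁻¹ : GL (Fin d) ℝ) : Matrix (Fin d) (Fin d) ℝ)‖ with hK'def
  have hK' : ∀ z : M, ‖(((A z)⁻¹ : GL (Fin d) ℝ) : Matrix (Fin d) (Fin d) ℝ)‖ ≤ K' :=
    fun z => hz₀ (Set.mem_univ z)
  have hK'0 : 0 ≤ K' := norm_nonneg _
  set Δ := Metric.diam (Set.univ : Set M) with hΔdef
  have hΔ0 : 0 ≤ Δ := Metric.diam_nonneg
  have hdistΔ : ∀ a b : M, dist a b ≤ Δ := fun a b =>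
    Metric.dist_le_diam_of_mem isCompact_univ.isBounded (Set.mem_univ _) (Set.mem_univ _)
  -- twisted bunching at nonnegative times
  have twistB : ∀ (m : ℕ) (z : M),
      ‖(((α ^ (-(m:ℤ))) (twcN f.toEquiv α A m z) : GL (Fin d) ℝ) : Matrix (Fin d) (Fin d) ℝ)‖
        * ‖((((α ^ (-(m:ℤ))) (twcN f.toEquiv α A m z))⁻¹ : GL (Fin d) ℝ) :
            Matrix (Fin d) (Fin d) ℝ)‖ ≤ CB * Real.exp (θ * m) := by
    intro m z
    have h := h1 (m:ℤ) z
    rw [twc_natCast, map_inv] at h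
    have habs : |((m:ℤ):ℝ)| = (m:ℝ) := by
      push_cast
      exact abs_of_nonneg (Nat.cast_nonneg m)
    rw [habs] at h
    exact h.le
  -- determinant product formula
  have detP : ∀ (m : ℕ) (z : M),
      |(((α ^ (-(m:ℤ))) (twcN f.toEquiv α A m z) : GL (Fin d) ℝ) :
          Matrix (Fin d) (Fin d) ℝ).det|
        = ∏ l ∈ Finset.range m,
            |(((α ^ (-((l:ℤ)+1))) (A ((f.toEquiv ^ l) z)) : GL (Fin d) ℝ) :
                Matrix (Fin d) (Fin d) ℝ).det| := by
    intro m z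
    induction m with
    | zero =>
      rw [show twcN f.toEquiv α A 0 z = 1 from rfl]
      simp
    | succ mm ih =>
      have hcast : (-((mm+1:ℕ):ℤ)) = -((mm:ℤ)+1) := by push_cast; ring
      rw [hcast, P_succ f.toEquiv α A mm z, Units.val_mul, Matrix.det_mul, abs_mul, ih,
        Finset.prod_range_succ, mul_comm]
  -- geometric data
  have hργ : ρ - ν * γ < 0 := by nlinarith [hγ.1, hν, hρ, hδ, hC₁]
  set r := Real.exp (ρ - ν * γ) with hrdef
  have hr0 : 0 ≤ r := (Real.exp_pos _).le
  have hr1 : r < 1 := Real.exp_lt_one_iff.2 hργ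
  have hC₁ν : (0:ℝ) ≤ C₁ ^ ν := (Real.rpow_pos_of_pos hC₁ ν).le
  have hΔν : (0:ℝ) ≤ Δ ^ ν := Real.rpow_nonneg hΔ0 ν
  set c8 := CB * Real.exp ρ * (CA * K' * (C₁ ^ ν * Δ ^ ν)) with hc8def
  have hc80 : 0 ≤ c8 := by
    apply mul_nonneg (mul_nonneg hCB.le (Real.exp_pos _).le)
    apply mul_nonneg (mul_nonneg hCA.le hK'0) (mul_nonneg hC₁ν hΔν)
  set Pm := Real.exp (c8 * (1 - r)⁻¹) with hPmdef
  have hPm1 : (1:ℝ) ≤ Pm := Real.one_le_exp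
    (mul_nonneg hc80 (inv_nonneg.2 (by linarith)))
  refine ⟨CB ^ 2 * Pm, by positivity, fun x y n hsh k hk => ?_⟩
  rw [twc_natCast, twc_natCast, map_inv]
  set D := dist x y with hDdef
  have hD0 : 0 ≤ D := dist_nonneg
  -- the per-step determinant comparison
  have hperl : ∀ l : ℕ, l < k →
      |(((α ^ (-((l:ℤ)+1))) (A ((f.toEquiv ^ l) y)) : GL (Fin d) ℝ) :
          Matrix (Fin d) (Fin d) ℝ).det|
        ≤ (1 + c8 * r ^ l) ^ d *
          |(((α ^ (-((l:ℤ)+1))) (A ((f.toEquiv ^ l) x)) : GL (Fin d) ℝ) :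
              Matrix (Fin d) (Fin d) ℝ).det| := by
    intro l hl
    set u1 := A ((f.toEquiv ^ l) y) with hu1
    set u2 := A ((f.toEquiv ^ l) x) with hu2
    set w := (α ^ (-((l:ℤ)+1))) (u1 * u2⁻¹) with hw
    have hsplit : ((α ^ (-((l:ℤ)+1))) u1 : GL (Fin d) ℝ) = w * (α ^ (-((l:ℤ)+1))) u2 := by
      rw [hw, ← map_mul]
      congr 1
      rw [inv_mul_cancel_right]
    rw [hsplit, Units.val_mul, Matrix.det_mul, abs_mul]
    apply mul_le_mul_of_nonneg_right _ (abs_nonneg _)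
    -- bound |det w| by (1 + c8 r^l)^d
    have habs : |((-((l:ℤ)+1) : ℤ):ℝ)| = (l:ℝ)+1 := by
      push_cast
      rw [abs_neg, abs_of_nonneg]
      positivity
    have hEnorm : ‖((u1 * u2⁻¹ : GL (Fin d) ℝ) : Matrix (Fin d) (Fin d) ℝ) - 1‖
        ≤ CA * (C₁ * Real.exp (-γ*l) * D) ^ ν * K' := by
      have hfac : ((u1 * u2⁻¹ : GL (Fin d) ℝ) : Matrix (Fin d) (Fin d) ℝ) - 1
          = (((u1 : GL (Fin d) ℝ) : Matrix (Fin d) (Fin d) ℝ) -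
              ((u2 : GL (Fin d) ℝ) : Matrix (Fin d) (Fin d) ℝ)) *
            ((u2⁻¹ : GL (Fin d) ℝ) : Matrix (Fin d) (Fin d) ℝ) := by
        rw [Units.val_mul, sub_mul]
        congr 1
        rw [← Units.val_mul, mul_inv_cancel, Units.val_one]
      rw [hfac]
      have hHold : ‖((u1 : GL (Fin d) ℝ) : Matrix (Fin d) (Fin d) ℝ) -
          ((u2 : GL (Fin d) ℝ) : Matrix (Fin d) (Fin d) ℝ)‖
          ≤ CA * (C₁ * Real.exp (-γ*l) * D) ^ ν := by
        have hh := hAH ((f.toEquiv ^ l) y) ((f.toEquiv ^ l) x)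
        have hdd : dist ((f.toEquiv ^ l) y) ((f.toEquiv ^ l) x)
            ≤ C₁ * Real.exp (-γ*l) * D := by
          rw [dist_comm]
          exact hsh l (le_trans hl.le hk)
        calc ‖((u1 : GL (Fin d) ℝ) : Matrix (Fin d) (Fin d) ℝ) -
            ((u2 : GL (Fin d) ℝ) : Matrix (Fin d) (Fin d) ℝ)‖
            ≤ CA * dist ((f.toEquiv ^ l) y) ((f.toEquiv ^ l) x) ^ ν := hh
          _ ≤ CA * (C₁ * Real.exp (-γ*l) * D) ^ ν := by
              apply mul_le_mul_of_nonneg_left _ hCA.le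
              exact Real.rpow_le_rpow dist_nonneg hdd hν.le
      calc ‖(((u1 : GL (Fin d) ℝ) : Matrix (Fin d) (Fin d) ℝ) -
            ((u2 : GL (Fin d) ℝ) : Matrix (Fin d) (Fin d) ℝ)) *
          ((u2⁻¹ : GL (Fin d) ℝ) : Matrix (Fin d) (Fin d) ℝ)‖
          ≤ ‖((u1 : GL (Fin d) ℝ) : Matrix (Fin d) (Fin d) ℝ) -
              ((u2 : GL (Fin d) ℝ) : Matrix (Fin d) (Fin d) ℝ)‖ *
            ‖((u2⁻¹ : GL (Fin d) ℝ) : Matrix (Fin d) (Fin d) ℝ)‖ := norm_mul_le _ _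
        _ ≤ (CA * (C₁ * Real.exp (-γ*l) * D) ^ ν) * K' := by
            apply mul_le_mul hHold (hK' _) (norm_nonneg _)
            positivity
    have hwm1 : ‖((w : GL (Fin d) ℝ) : Matrix (Fin d) (Fin d) ℝ) - 1‖ ≤ c8 * r ^ l := by
      have hh2 := h2 (-((l:ℤ)+1)) (u1 * u2⁻¹) 1
      rw [map_one, Units.val_one, habs] at hh2
      have hcomb : CB * Real.exp (ρ * ((l:ℝ)+1)) * (CA * (C₁ * Real.exp (-γ*l) * D) ^ ν * K')
          ≤ c8 * r ^ l := by
        have hexp : (C₁ * Real.exp (-γ*(l:ℝ)) * D) ^ (ν:ℝ)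
            = C₁ ^ ν * Real.exp (-γ*(l:ℝ)*ν) * D ^ ν := by
          rw [Real.mul_rpow (by positivity) hD0, Real.mul_rpow hC₁.le (Real.exp_pos _).le,
            ← Real.exp_mul]
        rw [hexp]
        have hDν : D ^ ν ≤ Δ ^ ν := Real.rpow_le_rpow hD0 (hdistΔ x y) hν.le
        have hexp2 : Real.exp (ρ * ((l:ℝ)+1)) * Real.exp (-γ*(l:ℝ)*ν)
            = Real.exp ρ * r ^ l := by
          rw [← Real.exp_add, hrdef, ← Real.exp_nat_mul, ← Real.exp_add]
          congr 1
          ring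
        calc CB * Real.exp (ρ * ((l:ℝ)+1)) *
              (CA * (C₁ ^ ν * Real.exp (-γ*(l:ℝ)*ν) * D ^ ν) * K')
            = (CB * Real.exp ρ * (CA * K' * (C₁ ^ ν * D ^ ν))) * r ^ l := by
              rw [show CB * Real.exp (ρ * ((l:ℝ)+1)) *
                  (CA * (C₁ ^ ν * Real.exp (-γ*(l:ℝ)*ν) * D ^ ν) * K')
                = CB * (Real.exp (ρ * ((l:ℝ)+1)) * Real.exp (-γ*(l:ℝ)*ν)) *
                  (CA * K' * (C₁ ^ ν * D ^ ν)) from by ring, hexp2]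
              ring
          _ ≤ (CB * Real.exp ρ * (CA * K' * (C₁ ^ ν * Δ ^ ν))) * r ^ l := by
              apply mul_le_mul_of_nonneg_right _ (pow_nonneg hr0 l)
              apply mul_le_mul_of_nonneg_left _ (mul_nonneg hCB.le (Real.exp_pos _).le)
              apply mul_le_mul_of_nonneg_left _ (mul_nonneg hCA.le hK'0)
              exact mul_le_mul_of_nonneg_left hDν hC₁ν
          _ = c8 * r ^ l := by rw [hc8def]
      calc ‖((w : GL (Fin d) ℝ) : Matrix (Fin d) (Fin d) ℝ) - 1‖
          ≤ CB * Real.exp (ρ * ((l:ℝ)+1)) *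
            ‖((u1 * u2⁻¹ : GL (Fin d) ℝ) : Matrix (Fin d) (Fin d) ℝ) - 1‖ := hh2
        _ ≤ CB * Real.exp (ρ * ((l:ℝ)+1)) * (CA * (C₁ * Real.exp (-γ*l) * D) ^ ν * K') := by
            apply mul_le_mul_of_nonneg_left hEnorm
            positivity
        _ ≤ c8 * r ^ l := hcomb
    have hwnorm : ‖((w : GL (Fin d) ℝ) : Matrix (Fin d) (Fin d) ℝ)‖ ≤ 1 + c8 * r ^ l := by
      have : ((w : GL (Fin d) ℝ) : Matrix (Fin d) (Fin d) ℝ)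
          = 1 + (((w : GL (Fin d) ℝ) : Matrix (Fin d) (Fin d) ℝ) - 1) := by abel
      rw [this]
      calc ‖(1:Matrix (Fin d) (Fin d) ℝ) +
            (((w : GL (Fin d) ℝ) : Matrix (Fin d) (Fin d) ℝ) - 1)‖
          ≤ ‖(1:Matrix (Fin d) (Fin d) ℝ)‖ +
            ‖((w : GL (Fin d) ℝ) : Matrix (Fin d) (Fin d) ℝ) - 1‖ := norm_add_le _ _
        _ ≤ 1 + c8 * r ^ l := by rw [hone]; linarith [hwm1]
    calc |((w : GL (Fin d) ℝ) : Matrix (Fin d) (Fin d) ℝ).det|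
        ≤ ‖((w : GL (Fin d) ℝ) : Matrix (Fin d) (Fin d) ℝ)‖ ^ d := abs_det_le_norm_pow _
      _ ≤ (1 + c8 * r ^ l) ^ d := pow_le_pow_left₀ (norm_nonneg _) hwnorm d
  -- determinant ratio bound
  have hratio : |(((α ^ (-(k:ℤ))) (twcN f.toEquiv α A k y) : GL (Fin d) ℝ) :
        Matrix (Fin d) (Fin d) ℝ).det|
      ≤ Pm ^ d * |(((α ^ (-(k:ℤ))) (twcN f.toEquiv α A k x) : GL (Fin d) ℝ) :
          Matrix (Fin d) (Fin d) ℝ).det| := by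
    rw [detP k y, detP k x]
    have hprodle : ∏ l ∈ Finset.range k, (1 + c8 * r ^ l) ≤ Pm := by
      calc ∏ l ∈ Finset.range k, (1 + c8 * r ^ l)
          ≤ ∏ l ∈ Finset.range k, Real.exp (c8 * r ^ l) := by
            apply Finset.prod_le_prod
            · intro l _; positivity
            · intro l _
              have := Real.add_one_le_exp (c8 * r ^ l)
              linarith
        _ = Real.exp (∑ l ∈ Finset.range k, c8 * r ^ l) := (Real.exp_sum _ _).symm
        _ ≤ Pm := by
            rw [hPmdef]
            apply Real.exp_le_exp.2
            rw [← Finset.mul_sum]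
            apply mul_le_mul_of_nonneg_left _ hc80
            exact sum_le_hasSum (Finset.range k) (fun i _ => pow_nonneg hr0 i)
              (hasSum_geometric_of_lt_one hr0 hr1)
    calc ∏ l ∈ Finset.range k,
          |(((α ^ (-((l:ℤ)+1))) (A ((f.toEquiv ^ l) y)) : GL (Fin d) ℝ) :
              Matrix (Fin d) (Fin d) ℝ).det|
        ≤ ∏ l ∈ Finset.range k, ((1 + c8 * r ^ l) ^ d *
            |(((α ^ (-((l:ℤ)+1))) (A ((f.toEquiv ^ l) x)) : GL (Fin d) ℝ) :
                Matrix (Fin d) (Fin d) ℝ).det|) := by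
          apply Finset.prod_le_prod (fun l _ => abs_nonneg _)
            (fun l hl => hperl l (Finset.mem_range.1 hl))
      _ = (∏ l ∈ Finset.range k, (1 + c8 * r ^ l) ^ d) *
          ∏ l ∈ Finset.range k,
            |(((α ^ (-((l:ℤ)+1))) (A ((f.toEquiv ^ l) x)) : GL (Fin d) ℝ) :
                Matrix (Fin d) (Fin d) ℝ).det| := Finset.prod_mul_distrib
      _ ≤ Pm ^ d * ∏ l ∈ Finset.range k,
            |(((α ^ (-((l:ℤ)+1))) (A ((f.toEquiv ^ l) x)) : GL (Fin d) ℝ) :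
                Matrix (Fin d) (Fin d) ℝ).det| := by
          apply mul_le_mul_of_nonneg_right _
            (Finset.prod_nonneg fun l _ => abs_nonneg _)
          rw [Finset.prod_pow]
          apply pow_le_pow_left₀ (Finset.prod_nonneg fun l _ => by positivity) hprodle
  -- assemble
  have hmain := unit_norm_estimate hd
    ((α ^ (-(k:ℤ))) (twcN f.toEquiv α A k y))
    ((α ^ (-(k:ℤ))) (twcN f.toEquiv α A k x))
    (by positivity : (0:ℝ) ≤ CB * Real.exp (θ * k))
    (le_trans zero_le_one hPm1)
    (twistB k y) (twistB k x) hratio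
  calc ‖(((α ^ (-(k:ℤ))) (twcN f.toEquiv α A k y) : GL (Fin d) ℝ) :
        Matrix (Fin d) (Fin d) ℝ)‖ *
      ‖((((α ^ (-(k:ℤ))) (twcN f.toEquiv α A k x))⁻¹ : GL (Fin d) ℝ) :
        Matrix (Fin d) (Fin d) ℝ)‖
      ≤ (CB * Real.exp (θ * k)) ^ 2 * Pm := hmain
    _ = CB ^ 2 * Pm * Real.exp (2 * θ * k) := by
        rw [mul_pow, sq (Real.exp (θ * k)), ← Real.exp_add,
          show θ * (k:ℝ) + θ * k = 2 * θ * k by ring]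
        ring
    _ ≤ CB ^ 2 * Pm * Real.exp ((4 * ρ + 2 * θ + δ) * k) := by
        apply mul_le_mul_of_nonneg_left _ (by positivity)
        apply Real.exp_le_exp.2
        have hk0 : (0:ℝ) ≤ (k:ℝ) := Nat.cast_nonneg k
        nlinarith [hρ, hδ]
end

section
/- Let f : M → M be a hyperbolic homeomorphism with local product structure on a compact metric space (M,d) with constants C, ε, λ, let A : M → GL(d,ℝ) be ν-Hölder continuous, α an automorphism of GL(d,ℝ), suppose the α-twisted cocycle A_α is fiber-bunched with constants ρ, θ, and let δ > 0 satisfy 5ρ + 2θ + δ < λν. Then there exists a constant C' > 0 such that for every y ∈ M, every z ∈ W^s_ε(y) and every integer n ≥ 0, ‖α^{-(n+1)}(A_α^{n+1}(z)^{-1} A_α^{n+1}(y)) − α^{-n}(A_α^n(z)^{-1} A_α^n(y))‖ ≤ C' e^{(5ρ + 2θ + δ − νλ)n} d(z,y)^ν. In particular, since 5ρ + 2θ + δ − νλ < 0, the sequence (α^{-n}(A_α^n(z)^{-1} A_α^n(y)))_n is Cauchy. -/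
open scoped Matrix.Norms.L2Operator

section AuxHolonomy

lemma twc_ofNat {M G : Type*} [Group G] (f : Equiv.Perm M) (α : MulAut G) (A : M → G)
    (n : ℕ) (x : M) : twc f α A (n : ℤ) x = twcN f α A n x := rfl

lemma twc_coe_succ {M G : Type*} [Group G] (f : Equiv.Perm M) (α : MulAut G) (A : M → G)
    (n : ℕ) (x : M) : twc f α A ((n : ℤ) + 1) x = twcN f α A (n + 1) x := by
  rw [show ((n : ℤ) + 1) = ((n + 1 : ℕ) : ℤ) by push_cast; ring]
  rfl

lemma holStep {M G : Type*} [Group G] (f : Equiv.Perm M) (α : MulAut G) (A : M → G)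
    (n : ℕ) (y z : M) :
    (α ^ (-((n : ℤ) + 1))) ((twcN f α A (n + 1) z)⁻¹ * twcN f α A (n + 1) y)
      = (α ^ (-(n : ℤ))) ((twcN f α A n z)⁻¹)
        * ((α ^ (-((n : ℤ) + 1))) ((A ((f ^ n) z))⁻¹ * A ((f ^ n) y))
        * (α ^ (-(n : ℤ))) (twcN f α A n y)) := by
  have key : ∀ g : G, (α ^ (-((n : ℤ) + 1))) (α g) = (α ^ (-(n : ℤ))) g := by
    intro g
    rw [show α g = (α ^ (1 : ℤ)) g by rw [zpow_one], ← MulAut.mul_apply, ← zpow_add]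
    norm_num
  have expand : (twcN f α A (n + 1) z)⁻¹ * twcN f α A (n + 1) y
      = (α ((twcN f α A n z)⁻¹))
        * (((A ((f ^ n) z))⁻¹ * A ((f ^ n) y)) * α (twcN f α A n y)) := by
    show (A ((f ^ n) z) * α (twcN f α A n z))⁻¹ * (A ((f ^ n) y) * α (twcN f α A n y)) = _
    rw [map_inv]
    group
  rw [expand, map_mul, map_mul, key, key]

lemma norm_PQR {R : Type*} [NormedRing R] (p q r : R) :
    ‖p * (q * r) - p * r‖ ≤ ‖p‖ * ‖q - 1‖ * ‖r‖ := by
  have h : p * (q * r) - p * r = p * (q - 1) * r := by noncomm_ring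
  rw [h]
  exact (norm_mul_le _ _).trans
    (mul_le_mul_of_nonneg_right (norm_mul_le _ _) (norm_nonneg _))

end AuxHolonomy

/-- **Cauchy estimate for the holonomy sequence.** There is `C' > 0` such that for every
`y` and every `z ∈ W^s_ε(y)`,
`‖α^{-(n+1)}(A_α^{n+1}(z)⁻¹ A_α^{n+1}(y)) − α^{-n}(A_α^n(z)⁻¹ A_α^n(y))‖
  ≤ C' e^{(5ρ+2θ+δ−νλ)n} d(z,y)^ν`; in particular the sequence is Cauchy. -/
theorem holonomy_sequence_cauchy {M : Type*} [MetricSpace M] [CompactSpace M] {d : ℕ}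
    (f : M ≃ₜ M) (C ε lam τ ν : ℝ) (hν : 0 < ν)
    (hf : IsHyperbolicLPS f C ε lam τ)
    (A : M → GL (Fin d) ℝ) (α : MulAut (GL (Fin d) ℝ))
    (hA : IsHolder ν A) (ρ θ δ : ℝ) (hρ : 0 < ρ) (hθ : 0 < θ) (hδ : 0 < δ)
    (hFB : FiberBunchedWith f.toEquiv α A ρ θ)
    (hlt : 5 * ρ + 2 * θ + δ < ν * lam) :
    ∃ C' > 0, ∀ y : M, ∀ z ∈ localStable f.toEquiv ε y,
      (∀ n : ℕ,
        ‖(((α ^ (-(n + 1 : ℤ)))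
              ((twc f.toEquiv α A (n + 1 : ℤ) z)⁻¹ * twc f.toEquiv α A (n + 1 : ℤ) y) :
            GL (Fin d) ℝ) : Matrix (Fin d) (Fin d) ℝ) -
          (((α ^ (-(n : ℤ)))
              ((twc f.toEquiv α A n z)⁻¹ * twc f.toEquiv α A n y) :
            GL (Fin d) ℝ) : Matrix (Fin d) (Fin d) ℝ)‖ ≤
          C' * Real.exp ((5 * ρ + 2 * θ + δ - ν * lam) * n) * dist z y ^ ν) ∧
      CauchySeq (fun n : ℕ =>
        (((α ^ (-(n : ℤ))) ((twc f.toEquiv α A n z)⁻¹ * twc f.toEquiv α A n y) :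
          GL (Fin d) ℝ) : Matrix (Fin d) (Fin d) ℝ)) := by
  obtain ⟨CA, hCA_pos, hCA⟩ := hA
  obtain ⟨CF, hCF_pos, hFB1, hFB2, hFB3⟩ := hFB
  rcases isEmpty_or_nonempty M with hM | hM
  · exact ⟨1, one_pos, fun y => (IsEmpty.false y).elim⟩
  -- continuity of x ↦ A x (as matrices)
  have hgcont : Continuous fun x : M => ((A x : GL (Fin d) ℝ) : Matrix (Fin d) (Fin d) ℝ) := by
    rw [continuous_iff_continuousAt]
    intro x
    rw [ContinuousAt, tendsto_iff_norm_sub_tendsto_zero]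
    have hd : Filter.Tendsto (fun y : M => dist y x) (nhds x) (nhds 0) := by
      have := (continuous_id.dist (continuous_const (y := x))).tendsto x
      simpa using this
    have hpow : Filter.Tendsto (fun y : M => dist y x ^ ν) (nhds x) (nhds 0) := by
      have hc : ContinuousAt (fun t : ℝ => t ^ ν) 0 :=
        Real.continuousAt_rpow_const 0 ν (Or.inr hν.le)
      have := hc.tendsto.comp hd
      simpa [Function.comp_def, Real.zero_rpow hν.ne'] using this
    have h0 : Filter.Tendsto (fun y : M => CA * dist y x ^ ν) (nhds x) (nhds 0) := by
      simpa using hpow.const_mul CA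
    exact squeeze_zero (fun y => norm_nonneg _) (fun y => hCA y x) h0
  -- continuity of x ↦ (A x)⁻¹ (as matrices)
  have hinv_eq : ∀ x : M, (((A x)⁻¹ : GL (Fin d) ℝ) : Matrix (Fin d) (Fin d) ℝ)
      = Ring.inverse ((A x : GL (Fin d) ℝ) : Matrix (Fin d) (Fin d) ℝ) :=
    fun x => (Ring.inverse_unit (A x)).symm
  have hinvcont :
      Continuous fun x : M => (((A x)⁻¹ : GL (Fin d) ℝ) : Matrix (Fin d) (Fin d) ℝ) := by
    rw [continuous_iff_continuousAt]
    intro x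
    have h1 : ContinuousAt (fun m : Matrix (Fin d) (Fin d) ℝ => Ring.inverse m)
        ((A x : GL (Fin d) ℝ) : Matrix (Fin d) (Fin d) ℝ) :=
      NormedRing.inverse_continuousAt (A x)
    simp only [hinv_eq]
    exact Filter.Tendsto.comp h1 hgcont.continuousAt
  -- uniform bound on ‖(A x)⁻¹‖
  obtain ⟨x₀, -, hx₀⟩ := isCompact_univ.exists_isMaxOn Set.univ_nonempty
    (hinvcont.norm.continuousOn)
  set Ki : ℝ := ‖(((A x₀)⁻¹ : GL (Fin d) ℝ) : Matrix (Fin d) (Fin d) ℝ)‖ with hKi_def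
  have hKi : ∀ x : M, ‖(((A x)⁻¹ : GL (Fin d) ℝ) : Matrix (Fin d) (Fin d) ℝ)‖ ≤ Ki :=
    fun x => hx₀ (Set.mem_univ x)
  have hKi0 : 0 ≤ Ki := norm_nonneg _
  -- constants
  set r0 : ℝ := Real.exp (ρ + θ - ν * lam) with hr0_def
  have hr0_lt : r0 < 1 := Real.exp_lt_one_iff.mpr (by linarith)
  have hr0_nonneg : 0 ≤ r0 := (Real.exp_pos _).le
  set S : ℝ := (1 - r0)⁻¹ with hS_def
  have hS0 : 0 ≤ S := inv_nonneg.mpr (by linarith)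
  have hCν : 0 ≤ C ^ ν := Real.rpow_nonneg hf.C_pos.le ν
  set L : ℝ := CF * CF * Real.exp ρ * Ki * CA * C ^ ν with hL_def
  have hL0 : 0 ≤ L :=
    mul_nonneg (mul_nonneg (mul_nonneg (mul_nonneg
      (mul_nonneg hCF_pos.le hCF_pos.le) (Real.exp_pos ρ).le) hKi0) hCA_pos.le) hCν
  set E : ℝ := ε ^ ν with hE_def
  have hE0 : 0 ≤ E := Real.rpow_nonneg hf.eps_pos.le ν
  set N1 : ℝ := ‖(1 : Matrix (Fin d) (Fin d) ℝ)‖ with hN1_def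
  have hN10 : 0 ≤ N1 := norm_nonneg _
  set KH : ℝ := N1 * Real.exp (L * E * S) with hKH_def
  have hKH0 : 0 ≤ KH := mul_nonneg hN10 (Real.exp_pos _).le
  have hLKH : 0 ≤ L * KH := mul_nonneg hL0 hKH0
  refine ⟨L * KH + 1, by linarith, fun y z hz => ?_⟩
  have hdz0 : 0 ≤ dist z y := dist_nonneg
  have hdzν0 : 0 ≤ dist z y ^ ν := Real.rpow_nonneg hdz0 ν
  have hdzε : dist z y ≤ ε := by
    have h := hz 0
    simp only [pow_zero, Equiv.Perm.coe_one, id_eq] at h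
    rwa [dist_comm] at h
  have hdzνE : dist z y ^ ν ≤ E := by
    rw [hE_def]; exact Real.rpow_le_rpow hdz0 hdzε hν.le
  have hy_self : y ∈ localStable f.toEquiv ε y := by
    intro n
    rw [dist_self]
    exact hf.eps_pos.le
  have hcontr : ∀ n : ℕ, dist ((f.toEquiv ^ n) z) ((f.toEquiv ^ n) y)
      ≤ C * Real.exp (-lam * n) * dist z y := fun n => hf.stable_contr y z y hz hy_self n
  set Hm : ℕ → Matrix (Fin d) (Fin d) ℝ := fun n =>
    (((α ^ (-(n : ℤ))) ((twcN f.toEquiv α A n z)⁻¹ * twcN f.toEquiv α A n y) :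
      GL (Fin d) ℝ) : Matrix (Fin d) (Fin d) ℝ) with hHm_def
  -- the one-step estimate
  have hstep : ∀ n : ℕ, ‖Hm (n + 1) - Hm n‖
      ≤ (L * Real.exp ((ρ + θ - ν * lam) * n) * dist z y ^ ν) * ‖Hm n‖ := by
    intro n
    have h1 : Hm (n + 1) =
        (((α ^ (-(n : ℤ))) ((twcN f.toEquiv α A n z)⁻¹) : GL (Fin d) ℝ) :
            Matrix (Fin d) (Fin d) ℝ)
          * ((((α ^ (-((n : ℤ) + 1)))
                ((A ((f.toEquiv ^ n) z))⁻¹ * A ((f.toEquiv ^ n) y)) : GL (Fin d) ℝ) :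
              Matrix (Fin d) (Fin d) ℝ)
            * (((α ^ (-(n : ℤ))) (twcN f.toEquiv α A n y) : GL (Fin d) ℝ) :
              Matrix (Fin d) (Fin d) ℝ)) := by
      show (((α ^ (-((n + 1 : ℕ) : ℤ)))
          ((twcN f.toEquiv α A (n + 1) z)⁻¹ * twcN f.toEquiv α A (n + 1) y) :
            GL (Fin d) ℝ) : Matrix (Fin d) (Fin d) ℝ) = _
      rw [show (-((n + 1 : ℕ) : ℤ)) = -((n : ℤ) + 1) by push_cast; ring]
      rw [holStep f.toEquiv α A n y z, Units.val_mul, Units.val_mul]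
    have h2 : Hm n =
        (((α ^ (-(n : ℤ))) ((twcN f.toEquiv α A n z)⁻¹) : GL (Fin d) ℝ) :
            Matrix (Fin d) (Fin d) ℝ)
          * (((α ^ (-(n : ℤ))) (twcN f.toEquiv α A n y) : GL (Fin d) ℝ) :
            Matrix (Fin d) (Fin d) ℝ) := by
      show (((α ^ (-(n : ℤ))) ((twcN f.toEquiv α A n z)⁻¹ * twcN f.toEquiv α A n y) :
          GL (Fin d) ℝ) : Matrix (Fin d) (Fin d) ℝ) = _
      rw [map_mul, Units.val_mul]
    conv_lhs => rw [h1, h2]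
    refine (norm_PQR _ _ _).trans ?_
    -- bound ‖R‖
    have hRZ : (((α ^ (-(n : ℤ))) (twcN f.toEquiv α A n y) : GL (Fin d) ℝ) :
          Matrix (Fin d) (Fin d) ℝ)
        = (((α ^ (-(n : ℤ))) (twcN f.toEquiv α A n z) : GL (Fin d) ℝ) :
            Matrix (Fin d) (Fin d) ℝ) * Hm n := by
      conv_lhs => rw [show twcN f.toEquiv α A n y
        = twcN f.toEquiv α A n z * ((twcN f.toEquiv α A n z)⁻¹ * twcN f.toEquiv α A n y)
          from (mul_inv_cancel_left _ _).symm]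
      rw [map_mul, Units.val_mul]
    have hRbound : ‖(((α ^ (-(n : ℤ))) (twcN f.toEquiv α A n y) : GL (Fin d) ℝ) :
          Matrix (Fin d) (Fin d) ℝ)‖
        ≤ ‖(((α ^ (-(n : ℤ))) (twcN f.toEquiv α A n z) : GL (Fin d) ℝ) :
            Matrix (Fin d) (Fin d) ℝ)‖ * ‖Hm n‖ := by
      rw [hRZ]; exact norm_mul_le _ _
    -- bound ‖P‖ * ‖Z‖ via fiber bunching (i)
    have hPZ : ‖(((α ^ (-(n : ℤ))) ((twcN f.toEquiv α A n z)⁻¹) : GL (Fin d) ℝ) :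
          Matrix (Fin d) (Fin d) ℝ)‖
        * ‖(((α ^ (-(n : ℤ))) (twcN f.toEquiv α A n z) : GL (Fin d) ℝ) :
            Matrix (Fin d) (Fin d) ℝ)‖
        ≤ CF * Real.exp (θ * n) := by
      have h := (hFB1 (n : ℤ) z).le
      rw [twc_ofNat] at h
      rw [show |((n : ℤ) : ℝ)| = (n : ℝ) by
        rw [Int.cast_natCast]; exact abs_of_nonneg (Nat.cast_nonneg n)] at h
      linarith [h]
    -- bound ‖Q - 1‖
    have hT1 : (((A ((f.toEquiv ^ n) z))⁻¹ : GL (Fin d) ℝ) : Matrix (Fin d) (Fin d) ℝ)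
        * ((A ((f.toEquiv ^ n) z) : GL (Fin d) ℝ) : Matrix (Fin d) (Fin d) ℝ) = 1 := by
      rw [← Units.val_mul, inv_mul_cancel, Units.val_one]
    have hT : (((A ((f.toEquiv ^ n) z))⁻¹ * A ((f.toEquiv ^ n) y) : GL (Fin d) ℝ) :
          Matrix (Fin d) (Fin d) ℝ) - 1
        = (((A ((f.toEquiv ^ n) z))⁻¹ : GL (Fin d) ℝ) : Matrix (Fin d) (Fin d) ℝ)
          * (((A ((f.toEquiv ^ n) y) : GL (Fin d) ℝ) : Matrix (Fin d) (Fin d) ℝ)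
            - ((A ((f.toEquiv ^ n) z) : GL (Fin d) ℝ) : Matrix (Fin d) (Fin d) ℝ)) := by
      rw [Units.val_mul, mul_sub, hT1]
    have hdistpow : dist ((f.toEquiv ^ n) y) ((f.toEquiv ^ n) z) ^ ν
        ≤ C ^ ν * Real.exp (-lam * n * ν) * dist z y ^ ν := by
      have h := hcontr n
      rw [dist_comm] at h
      have h2 := Real.rpow_le_rpow dist_nonneg h hν.le
      refine h2.trans (le_of_eq ?_)
      rw [Real.mul_rpow (mul_nonneg hf.C_pos.le (Real.exp_pos _).le) hdz0,
        Real.mul_rpow hf.C_pos.le (Real.exp_pos _).le, ← Real.exp_mul]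
    have hTnorm : ‖(((A ((f.toEquiv ^ n) z))⁻¹ * A ((f.toEquiv ^ n) y) : GL (Fin d) ℝ) :
          Matrix (Fin d) (Fin d) ℝ) - 1‖
        ≤ Ki * (CA * (C ^ ν * Real.exp (-lam * n * ν) * dist z y ^ ν)) := by
      rw [hT]
      refine (norm_mul_le _ _).trans ?_
      refine mul_le_mul (hKi _) ?_ (norm_nonneg _) hKi0
      refine (hCA _ _).trans ?_
      exact mul_le_mul_of_nonneg_left hdistpow hCA_pos.le
    have hQbound : ‖(((α ^ (-((n : ℤ) + 1)))
          ((A ((f.toEquiv ^ n) z))⁻¹ * A ((f.toEquiv ^ n) y)) : GL (Fin d) ℝ) :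
            Matrix (Fin d) (Fin d) ℝ) - 1‖
        ≤ CF * Real.exp (ρ * (n + 1))
          * (Ki * (CA * (C ^ ν * Real.exp (-lam * n * ν) * dist z y ^ ν))) := by
      have h := hFB2 (-((n : ℤ) + 1)) ((A ((f.toEquiv ^ n) z))⁻¹ * A ((f.toEquiv ^ n) y)) 1
      rw [map_one, Units.val_one] at h
      rw [show |((-((n : ℤ) + 1) : ℤ) : ℝ)| = ((n : ℝ) + 1) by
        push_cast
        rw [abs_neg]
        exact abs_of_nonneg (by positivity)] at h
      refine h.trans ?_
      exact mul_le_mul_of_nonneg_left hTnorm (by positivity)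
    -- combine
    calc ‖(((α ^ (-(n : ℤ))) ((twcN f.toEquiv α A n z)⁻¹) : GL (Fin d) ℝ) :
            Matrix (Fin d) (Fin d) ℝ)‖
          * ‖(((α ^ (-((n : ℤ) + 1)))
                ((A ((f.toEquiv ^ n) z))⁻¹ * A ((f.toEquiv ^ n) y)) : GL (Fin d) ℝ) :
              Matrix (Fin d) (Fin d) ℝ) - 1‖
          * ‖(((α ^ (-(n : ℤ))) (twcN f.toEquiv α A n y) : GL (Fin d) ℝ) :
              Matrix (Fin d) (Fin d) ℝ)‖
        ≤ ‖(((α ^ (-(n : ℤ))) ((twcN f.toEquiv α A n z)⁻¹) : GL (Fin d) ℝ) :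
            Matrix (Fin d) (Fin d) ℝ)‖
          * ‖(((α ^ (-((n : ℤ) + 1)))
                ((A ((f.toEquiv ^ n) z))⁻¹ * A ((f.toEquiv ^ n) y)) : GL (Fin d) ℝ) :
              Matrix (Fin d) (Fin d) ℝ) - 1‖
          * (‖(((α ^ (-(n : ℤ))) (twcN f.toEquiv α A n z) : GL (Fin d) ℝ) :
              Matrix (Fin d) (Fin d) ℝ)‖ * ‖Hm n‖) := by
          exact mul_le_mul_of_nonneg_left hRbound
            (mul_nonneg (norm_nonneg _) (norm_nonneg _))
      _ = (‖(((α ^ (-(n : ℤ))) ((twcN f.toEquiv α A n z)⁻¹) : GL (Fin d) ℝ) :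
            Matrix (Fin d) (Fin d) ℝ)‖
          * ‖(((α ^ (-(n : ℤ))) (twcN f.toEquiv α A n z) : GL (Fin d) ℝ) :
              Matrix (Fin d) (Fin d) ℝ)‖)
          * ‖(((α ^ (-((n : ℤ) + 1)))
                ((A ((f.toEquiv ^ n) z))⁻¹ * A ((f.toEquiv ^ n) y)) : GL (Fin d) ℝ) :
              Matrix (Fin d) (Fin d) ℝ) - 1‖
          * ‖Hm n‖ := by ring
      _ ≤ (CF * Real.exp (θ * n))
          * (CF * Real.exp (ρ * (n + 1))
            * (Ki * (CA * (C ^ ν * Real.exp (-lam * n * ν) * dist z y ^ ν))))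
          * ‖Hm n‖ := by
          refine mul_le_mul_of_nonneg_right ?_ (norm_nonneg _)
          exact mul_le_mul hPZ hQbound (norm_nonneg _)
            (by positivity)
      _ = (L * Real.exp ((ρ + θ - ν * lam) * n) * dist z y ^ ν) * ‖Hm n‖ := by
          rw [hL_def]
          rw [show (ρ + θ - ν * lam) * (n : ℝ)
            = θ * n + (ρ * n + -lam * n * ν) from by ring,
            Real.exp_add, Real.exp_add,
            show ρ * ((n : ℝ) + 1) = ρ * n + ρ from by ring, Real.exp_add]
          ring
  -- uniform bound on ‖Hm n‖
  have hgeom : ∀ n : ℕ, (∑ k ∈ Finset.range n, r0 ^ k) ≤ S := by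
    intro n
    have hsum := hasSum_geometric_of_lt_one hr0_nonneg hr0_lt
    have h := Summable.sum_le_tsum (Finset.range n) (fun i _ => pow_nonneg hr0_nonneg i) hsum.summable
    rw [hsum.tsum_eq] at h
    exact h
  have hHbd : ∀ n : ℕ, ‖Hm n‖ ≤ KH := by
    have key : ∀ n : ℕ, ‖Hm n‖ ≤ N1 * Real.exp (L * E * ∑ k ∈ Finset.range n, r0 ^ k) := by
      intro n
      induction n with
      | zero =>
        have h0 : Hm 0 = 1 := by
          show (((α ^ (-((0 : ℕ) : ℤ))) ((twcN f.toEquiv α A 0 z)⁻¹ * twcN f.toEquiv α A 0 y) :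
            GL (Fin d) ℝ) : Matrix (Fin d) (Fin d) ℝ) = 1
          simp [twcN]
        rw [h0]
        simp only [Finset.range_zero, Finset.sum_empty, mul_zero, Real.exp_zero, mul_one]
        rw [hN1_def]
      | succ n ih =>
        have tri : ‖Hm (n + 1)‖ ≤ ‖Hm n‖ + ‖Hm (n + 1) - Hm n‖ := by
          calc ‖Hm (n + 1)‖ = ‖Hm n + (Hm (n + 1) - Hm n)‖ := by rw [add_sub_cancel]
            _ ≤ ‖Hm n‖ + ‖Hm (n + 1) - Hm n‖ := norm_add_le _ _
        have hstep' : ‖Hm (n + 1) - Hm n‖ ≤ (L * E * r0 ^ n) * ‖Hm n‖ := by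
          refine (hstep n).trans ?_
          refine mul_le_mul_of_nonneg_right ?_ (norm_nonneg _)
          rw [mul_comm (ρ + θ - ν * lam) (n : ℝ), Real.exp_nat_mul, ← hr0_def]
          calc L * r0 ^ n * dist z y ^ ν ≤ L * r0 ^ n * E :=
                mul_le_mul_of_nonneg_left hdzνE (mul_nonneg hL0 (pow_nonneg hr0_nonneg n))
            _ = L * E * r0 ^ n := by ring
        have hr0n : 0 ≤ L * E * r0 ^ n :=
          mul_nonneg (mul_nonneg hL0 hE0) (pow_nonneg hr0_nonneg n)
        calc ‖Hm (n + 1)‖ ≤ ‖Hm n‖ + (L * E * r0 ^ n) * ‖Hm n‖ := by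
              have := hstep' ; linarith [tri]
          _ = ‖Hm n‖ * (1 + L * E * r0 ^ n) := by ring
          _ ≤ (N1 * Real.exp (L * E * ∑ k ∈ Finset.range n, r0 ^ k))
              * (1 + L * E * r0 ^ n) :=
              mul_le_mul_of_nonneg_right ih (by linarith)
          _ ≤ (N1 * Real.exp (L * E * ∑ k ∈ Finset.range n, r0 ^ k))
              * Real.exp (L * E * r0 ^ n) := by
              refine mul_le_mul_of_nonneg_left ?_
                (mul_nonneg hN10 (Real.exp_pos _).le)
              have := Real.add_one_le_exp (L * E * r0 ^ n)
              linarith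
          _ = N1 * Real.exp (L * E * ∑ k ∈ Finset.range (n + 1), r0 ^ k) := by
              rw [Finset.sum_range_succ, mul_add, Real.exp_add]
              ring
    intro n
    refine (key n).trans ?_
    rw [hKH_def]
    refine mul_le_mul_of_nonneg_left ?_ hN10
    exact Real.exp_le_exp.mpr (mul_le_mul_of_nonneg_left (hgeom n) (mul_nonneg hL0 hE0))
  -- the main estimate, rephrased
  have hmain : ∀ n : ℕ, ‖Hm (n + 1) - Hm n‖
      ≤ (L * KH + 1) * Real.exp ((5 * ρ + 2 * θ + δ - ν * lam) * n) * dist z y ^ ν := by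
    intro n
    refine (hstep n).trans ?_
    have h1 : (L * Real.exp ((ρ + θ - ν * lam) * n) * dist z y ^ ν) * ‖Hm n‖
        ≤ (L * Real.exp ((ρ + θ - ν * lam) * n) * dist z y ^ ν) * KH :=
      mul_le_mul_of_nonneg_left (hHbd n)
        (mul_nonneg (mul_nonneg hL0 (Real.exp_pos _).le) hdzν0)
    refine h1.trans ?_
    have he : Real.exp ((ρ + θ - ν * lam) * n) ≤ Real.exp ((5 * ρ + 2 * θ + δ - ν * lam) * n) :=
      Real.exp_le_exp.mpr (mul_le_mul_of_nonneg_right (by linarith) (Nat.cast_nonneg n))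
    calc (L * Real.exp ((ρ + θ - ν * lam) * n) * dist z y ^ ν) * KH
        = (L * KH) * Real.exp ((ρ + θ - ν * lam) * n) * dist z y ^ ν := by ring
      _ ≤ (L * KH) * Real.exp ((5 * ρ + 2 * θ + δ - ν * lam) * n) * dist z y ^ ν :=
          mul_le_mul_of_nonneg_right (mul_le_mul_of_nonneg_left he hLKH) hdzν0
      _ ≤ (L * KH + 1) * Real.exp ((5 * ρ + 2 * θ + δ - ν * lam) * n) * dist z y ^ ν := by
          refine mul_le_mul_of_nonneg_right ?_ hdzν0
          exact mul_le_mul_of_nonneg_right (by linarith) (Real.exp_pos _).le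
  have hgoal : ∀ n : ℕ,
      ‖(((α ^ (-((n : ℤ) + 1)))
            ((twc f.toEquiv α A ((n : ℤ) + 1) z)⁻¹ * twc f.toEquiv α A ((n : ℤ) + 1) y) :
          GL (Fin d) ℝ) : Matrix (Fin d) (Fin d) ℝ) -
        (((α ^ (-(n : ℤ)))
            ((twc f.toEquiv α A (n : ℤ) z)⁻¹ * twc f.toEquiv α A (n : ℤ) y) :
          GL (Fin d) ℝ) : Matrix (Fin d) (Fin d) ℝ)‖ ≤
        (L * KH + 1) * Real.exp ((5 * ρ + 2 * θ + δ - ν * lam) * n) * dist z y ^ ν := by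
    intro n
    have h := hmain n
    rw [hHm_def] at h
    simp only at h
    rw [twc_coe_succ, twc_coe_succ, twc_ofNat, twc_ofNat,
      show (-((n : ℤ) + 1)) = -(((n + 1 : ℕ)) : ℤ) by push_cast; ring]
    exact h
  refine ⟨hgoal, ?_⟩
  refine cauchySeq_of_le_geometric (Real.exp (5 * ρ + 2 * θ + δ - ν * lam))
    ((L * KH + 1) * dist z y ^ ν) (Real.exp_lt_one_iff.mpr (by linarith)) ?_
  intro n
  rw [dist_eq_norm, norm_sub_rev]
  have h := hgoal n
  rw [show ((n : ℤ) + 1) = (((n + 1 : ℕ)) : ℤ) by push_cast; ring] at h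
  refine h.trans (le_of_eq ?_)
  rw [mul_comm (5 * ρ + 2 * θ + δ - ν * lam) (n : ℝ), Real.exp_nat_mul]
  ring
end

section
/- Let f : M → M be a hyperbolic homeomorphism with local product structure on a compact metric space (M,d), let A, B : M → GL(d,ℝ) be ν-Hölder continuous, α an automorphism of GL(d,ℝ), and suppose the α-twisted cocycles A_α and B_α are fiber-bunched. Suppose x ∈ M is a fixed point of f with A(x) = B(x), and let y ∈ W^s(x). Then the sequence α^{-n}(A_α^n(y)^{-1} · B_α^n(y)) converges as n → +∞ to H^{s,A,α}_{xy} · (H^{s,B,α}_{xy})^{-1}, where H^{s,A,α} and H^{s,B,α} denote the stable holonomies of the cocycles A_α and B_α. -/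
open scoped Matrix.Norms.L2Operator

/-- **Convergence to the transfer map.** If `x` is a fixed point of `f` with `A(x) = B(x)`
and `y ∈ W^s(x)`, then `α^{-n}(A_α^n(y)⁻¹ · B_α^n(y))` converges to
`H^{s,A,α}_{xy}·(H^{s,B,α}_{xy})⁻¹` as `n → ∞`. -/
theorem convergence_to_transfer_map {M : Type*} [MetricSpace M] [CompactSpace M]
    {d : ℕ} (f : M ≃ₜ M) (C ε lam τ ν : ℝ) (hν : 0 < ν)
    (hf : IsHyperbolicLPS f C ε lam τ)
    (A B : M → GL (Fin d) ℝ) (α : MulAut (GL (Fin d) ℝ))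
    (hA : IsHolder ν A) (hB : IsHolder ν B)
    (hFA : FiberBunched f.toEquiv α A ν lam) (hFB : FiberBunched f.toEquiv α B ν lam)
    (x : M) (hx : f x = x) (hAB : A x = B x)
    (y : M) (hy : y ∈ globalStable f.toEquiv ε x)
    (HsA HsB : GL (Fin d) ℝ)
    (hHsA : IsStableHol f.toEquiv α A x y HsA)
    (hHsB : IsStableHol f.toEquiv α B x y HsB) :
    Filter.Tendsto
      (fun n : ℕ =>
        (((α ^ (-(n : ℤ))) ((twc f.toEquiv α A n y)⁻¹ * twc f.toEquiv α B n y) :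
          GL (Fin d) ℝ) : Matrix (Fin d) (Fin d) ℝ))
      Filter.atTop (nhds ((HsA * HsB⁻¹ : GL (Fin d) ℝ) : Matrix (Fin d) (Fin d) ℝ)) := by
  -- The fixed point is fixed by all iterates.
  have hfix : ∀ n : ℕ, (f.toEquiv ^ n) x = x := by
    intro n
    induction n with
    | zero => rfl
    | succ n ih => rw [pow_succ, Equiv.Perm.mul_apply, show f.toEquiv x = x from hx, ih]
  -- At the fixed point, the two cocycles agree.
  have hcoc : ∀ n : ℕ, twcN f.toEquiv α A n x = twcN f.toEquiv α B n x := by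
    intro n
    induction n with
    | zero => rfl
    | succ n ih => simp [twcN, hfix, hAB, ih]
  have hcoc' : ∀ n : ℕ, twc f.toEquiv α A (n : ℤ) x = twc f.toEquiv α B (n : ℤ) x := by
    intro n
    show twc f.toEquiv α A (Int.ofNat n) x = twc f.toEquiv α B (Int.ofNat n) x
    simpa [twc] using hcoc n
  set u : ℕ → GL (Fin d) ℝ := fun n =>
    (α ^ (-(n : ℤ))) ((twc f.toEquiv α A (n : ℤ) y)⁻¹ * twc f.toEquiv α A (n : ℤ) x)
    with hu
  set v : ℕ → GL (Fin d) ℝ := fun n =>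
    (α ^ (-(n : ℤ))) ((twc f.toEquiv α B (n : ℤ) y)⁻¹ * twc f.toEquiv α B (n : ℤ) x)
    with hv
  have key : ∀ n : ℕ,
      (α ^ (-(n : ℤ))) ((twc f.toEquiv α A (n : ℤ) y)⁻¹ * twc f.toEquiv α B (n : ℤ) y)
        = u n * (v n)⁻¹ := by
    intro n
    rw [hu, hv]
    simp only [← map_inv, ← map_mul]
    congr 1
    rw [mul_inv_rev, inv_inv, hcoc' n]
    group
  -- Convergence of the inverse factor via continuity of `Ring.inverse`.
  have hvinv : Filter.Tendsto
      (fun n : ℕ => Ring.inverse ((v n : Matrix (Fin d) (Fin d) ℝ)))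
      Filter.atTop (nhds (Ring.inverse (HsB : Matrix (Fin d) (Fin d) ℝ))) :=
    (NormedRing.inverse_continuousAt HsB).tendsto.comp hHsB
  have hmul : Filter.Tendsto
      (fun n : ℕ => ((u n : Matrix (Fin d) (Fin d) ℝ) *
        Ring.inverse ((v n : Matrix (Fin d) (Fin d) ℝ))))
      Filter.atTop (nhds ((HsA : Matrix (Fin d) (Fin d) ℝ) *
        Ring.inverse ((HsB : Matrix (Fin d) (Fin d) ℝ)))) :=
    hHsA.mul hvinv
  have hlim : ((HsA : Matrix (Fin d) (Fin d) ℝ) *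
      Ring.inverse ((HsB : Matrix (Fin d) (Fin d) ℝ)))
      = ((HsA * HsB⁻¹ : GL (Fin d) ℝ) : Matrix (Fin d) (Fin d) ℝ) := by
    rw [Ring.inverse_unit, Units.val_mul]
  rw [← hlim]
  refine hmul.congr fun n => ?_
  rw [key n, Units.val_mul, Ring.inverse_unit]
end
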